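/- arXiv:2104.07974 — 8 statements merged into one kernel-verified Lean document; each statement's English description precedes it below -/
import Mathlib

section
/- Let {I_1,…,I_k} be a k-clustering of A of cost at most B and let i ∈ {1,…,k} be such that |I_i| ≥ 2B+1. If c_1,…,c_k ∈ Σ^m and c'_1,…,c'_k ∈ Σ^m are two families of vectors each satisfying Σ_{h=1}^k Σ_{j∈I_h} d_H(·_h, a_j) ≤ B, then c_i = c'_i; i.e., the median of a cluster of size at least 2B+1 is unique. -/
/-- The median of a cluster of size at least `2B+1` in a `k`-clustering of
cost at most `B` is unique. -/
theorem big_cluster_median_unique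
    {α : Type*} [Fintype α] [Nonempty α] [DecidableEq α]
    (m n k B : ℕ) (hm : 0 < m) (hn : 0 < n) (hk : 0 < k)
    (a : Fin n → Fin m → α)
    (I : Fin k → Finset (Fin n))
    (hdisj : ∀ i j : Fin k, i ≠ j → Disjoint (I i) (I j))
    (hcover : ∀ x : Fin n, ∃ i, x ∈ I i)
    (hcost : ∃ c : Fin k → Fin m → α,
      ∑ i, ∑ j ∈ I i, hammingDist (c i) (a j) ≤ B)
    (i : Fin k) (hsize : 2 * B + 1 ≤ (I i).card) :
    ∀ c c' : Fin k → Fin m → α,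
      (∑ h, ∑ j ∈ I h, hammingDist (c h) (a j)) ≤ B →
      (∑ h, ∑ j ∈ I h, hammingDist (c' h) (a j)) ≤ B →
      c i = c' i := by
  intro c c' hc hc'
  funext t
  by_contra hne
  have h1 : ∑ j ∈ I i, hammingDist (c i) (a j) ≤ B :=
    le_trans (Finset.single_le_sum (f := fun h => ∑ j ∈ I h, hammingDist (c h) (a j))
      (fun _ _ => Nat.zero_le _) (Finset.mem_univ i)) hc
  have h2 : ∑ j ∈ I i, hammingDist (c' i) (a j) ≤ B :=
    le_trans (Finset.single_le_sum (f := fun h => ∑ j ∈ I h, hammingDist (c' h) (a j))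
      (fun _ _ => Nat.zero_le _) (Finset.mem_univ i)) hc'
  have key : ∀ j ∈ I i, 1 ≤ hammingDist (c i) (a j) + hammingDist (c' i) (a j) := by
    intro j _
    by_cases h : c i t = a j t
    · have h' : c' i t ≠ a j t := fun h2 => hne (h.trans h2.symm)
      have : c' i ≠ a j := fun he => h' (congrFun he t)
      have := hammingDist_pos.mpr this
      omega
    · have : c i ≠ a j := fun he => h (congrFun he t)
      have := hammingDist_pos.mpr this
      omega
  have hsum : (I i).card ≤ ∑ j ∈ I i, (hammingDist (c i) (a j) + hammingDist (c' i) (a j)) := by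
    calc (I i).card = ∑ _j ∈ I i, 1 := by simp
    _ ≤ _ := Finset.sum_le_sum key
  rw [Finset.sum_add_distrib] at hsum
  omega
end

section
/- Let {I_1,…,I_k} be a k-clustering of A of cost at most B, and let J_1,…,J_s be the initial clusters of A. Then the number of indices p ∈ {1,…,s} such that J_p has nonempty intersection with at least one composite cluster of {I_1,…,I_k} is at most 2B. -/
/-- For a `k`-clustering of cost at most `B`, at most `2B` initial clusters
have nonempty intersection with some composite cluster. -/
theorem initial_clusters_meeting_composite_at_most_2B
    {α : Type*} [Fintype α] [Nonempty α] [DecidableEq α]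
    (m n k s B : ℕ) (hm : 0 < m) (hn : 0 < n) (hk : 0 < k)
    (a : Fin n → Fin m → α)
    -- the initial clusters J_1, ..., J_s of A
    (J : Fin s → Finset (Fin n))
    (hJne : ∀ p, (J p).Nonempty)
    (hJclass : ∀ p, ∀ x ∈ J p, ∀ y : Fin n, (y ∈ J p ↔ a y = a x))
    (hJdisj : ∀ p q : Fin s, p ≠ q → Disjoint (J p) (J q))
    (hJcover : ∀ x : Fin n, ∃ p, x ∈ J p)
    -- a k-clustering of cost at most B
    (I : Fin k → Finset (Fin n))
    (hdisj : ∀ i j : Fin k, i ≠ j → Disjoint (I i) (I j))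
    (hcover : ∀ x : Fin n, ∃ i, x ∈ I i)
    (hcost : ∃ c : Fin k → Fin m → α,
      ∑ i, ∑ j ∈ I i, hammingDist (c i) (a j) ≤ B) :
    {p : Fin s | ∃ i : Fin k,
      (∃ h ∈ I i, ∃ j ∈ I i, a h ≠ a j) ∧ (J p ∩ I i).Nonempty}.ncard ≤ 2 * B := by
  classical
  obtain ⟨c, hc⟩ := hcost
  set P : Fin s → Prop := fun p => ∃ i : Fin k,
      (∃ h ∈ I i, ∃ j ∈ I i, a h ≠ a j) ∧ (J p ∩ I i).Nonempty with hP
  have hset : {p : Fin s | P p} = ↑(Finset.univ.filter P) := by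
    ext p; simp
  rw [hset, Set.ncard_coe_finset]
  have hf : ∀ p, P p → ∃ i : Fin k,
      (∃ h ∈ I i, ∃ j ∈ I i, a h ≠ a j) ∧ (J p ∩ I i).Nonempty := fun p h => h
  choose f hf1 hf2 using hf
  set T := Finset.univ.filter P with hT
  let F : Fin s → Fin k := fun p => if h : P p then f p h else ⟨0, hk⟩
  have hcard : T.card = ∑ i : Fin k, (T.filter fun p => F p = i).card :=
    Finset.card_eq_sum_card_fiberwise (fun p _ => Finset.mem_univ _)
  rw [hcard]
  have key : ∀ i : Fin k, (T.filter fun p => F p = i).card ≤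
      2 * ∑ j ∈ I i, hammingDist (c i) (a j) := by
    intro i
    rcases (T.filter fun p => F p = i).eq_empty_or_nonempty with he | ⟨p₀, hp₀⟩
    · simp [he]
    · have hp₀' := Finset.mem_filter.mp hp₀
      have hPp₀ : P p₀ := (Finset.mem_filter.mp hp₀'.1).2
      have hFp₀ : F p₀ = i := hp₀'.2
      have hfi : f p₀ hPp₀ = i := by simpa [F, hPp₀] using hFp₀
      have hcomp : ∃ h ∈ I i, ∃ j ∈ I i, a h ≠ a j := hfi ▸ hf1 p₀ hPp₀
      -- for each p in the fiber, pick x p ∈ J p ∩ I i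
      have hx : ∀ p ∈ (T.filter fun p => F p = i), ∃ x, x ∈ J p ∩ I i := by
        intro p hp
        have hp' := Finset.mem_filter.mp hp
        have hPp : P p := (Finset.mem_filter.mp hp'.1).2
        have hfp : f p hPp = i := by simpa [F, hPp] using hp'.2
        obtain ⟨x, hx⟩ := hf2 p hPp
        exact ⟨x, hfp ▸ hx⟩
      choose x hxmem using hx
      set S := (I i).image a with hS
      -- fiber injects into S
      have h1 : (T.filter fun p => F p = i).card ≤ S.card := by
        apply Finset.card_le_card_of_injOn (fun p => if h : _ then a (x p h) else a ⟨0, hn⟩)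
        · intro p hp
          simp only [Finset.mem_coe] at hp ⊢
          simp only [hp, dif_pos]
          exact Finset.mem_image_of_mem a (Finset.mem_inter.mp (hxmem p hp)).2
        · intro p hp q hq hpq
          simp only [Finset.mem_coe] at hp hq
          simp only [hp, hq, dif_pos] at hpq
          by_contra hne
          have hxp := Finset.mem_inter.mp (hxmem p hp)
          have hxq := Finset.mem_inter.mp (hxmem q hq)
          have : x q hq ∈ J p := (hJclass p (x p hp) hxp.1 (x q hq)).mpr hpq.symm
          exact (Finset.disjoint_left.mp (hJdisj p q hne) this) hxq.1
      -- S.card ≥ 2 since composite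
      have h2 : 2 ≤ S.card := by
        obtain ⟨u, hu, v, hv, huv⟩ := hcomp
        have : ({a u, a v} : Finset (Fin m → α)) ⊆ S := by
          intro w hw
          rcases Finset.mem_insert.mp hw with rfl | hw
          · exact Finset.mem_image_of_mem a hu
          · rw [Finset.mem_singleton] at hw
            subst hw
            exact Finset.mem_image_of_mem a hv
        calc 2 = ({a u, a v} : Finset (Fin m → α)).card := by
                rw [Finset.card_insert_of_notMem (by simpa using huv), Finset.card_singleton]
          _ ≤ S.card := Finset.card_le_card this
      -- (S \ {c i}).card ≤ cost_i
      have h3 : (S \ {c i}).card ≤ ∑ j ∈ I i, hammingDist (c i) (a j) := by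
        have hsub : S \ {c i} ⊆ ((I i).filter fun j => a j ≠ c i).image a := by
          intro v hv
          obtain ⟨hvS, hvne⟩ := Finset.mem_sdiff.mp hv
          obtain ⟨j, hj, rfl⟩ := Finset.mem_image.mp hvS
          exact Finset.mem_image_of_mem a
            (Finset.mem_filter.mpr ⟨hj, by simpa using hvne⟩)
        calc (S \ {c i}).card ≤ (((I i).filter fun j => a j ≠ c i).image a).card :=
              Finset.card_le_card hsub
          _ ≤ ((I i).filter fun j => a j ≠ c i).card := Finset.card_image_le
          _ ≤ ∑ j ∈ (I i).filter fun j => a j ≠ c i, hammingDist (c i) (a j) := by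
              rw [Finset.card_eq_sum_ones]
              apply Finset.sum_le_sum
              intro j hj
              have hne : a j ≠ c i := (Finset.mem_filter.mp hj).2
              have : hammingDist (c i) (a j) ≠ 0 :=
                fun h => hne (hammingDist_eq_zero.mp h).symm
              omega
          _ ≤ ∑ j ∈ I i, hammingDist (c i) (a j) :=
              Finset.sum_le_sum_of_subset (Finset.filter_subset _ _)
      have h4 : S.card ≤ (S \ {c i}).card + 1 := by
        have := Finset.card_sdiff_add_card_inter S {c i}
        have h5 : (S ∩ {c i}).card ≤ 1 := by
          calc (S ∩ {c i}).card ≤ ({c i} : Finset (Fin m → α)).card :=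
                Finset.card_le_card (Finset.inter_subset_right)
            _ = 1 := Finset.card_singleton _
        omega
      omega
  calc ∑ i : Fin k, (T.filter fun p => F p = i).card
      ≤ ∑ i : Fin k, 2 * ∑ j ∈ I i, hammingDist (c i) (a j) :=
        Finset.sum_le_sum fun i _ => key i
    _ = 2 * ∑ i, ∑ j ∈ I i, hammingDist (c i) (a j) := by rw [Finset.mul_sum]
    _ ≤ 2 * B := by omega
end

section
/- Let p and q be positive integers with p ≤ q, let h be a positive integer, and let X be a finite set. Then X can be partitioned into h pairwise disjoint subsets whose union is X, each of size at least p and at most q, if and only if ⌈|X|/q⌉ ≤ h ≤ ⌊|X|/p⌋. -/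
lemma partition_aux {α : Type*} [DecidableEq α] (p q : ℕ) (hp : 0 < p) (hpq : p ≤ q) :
    ∀ h : ℕ, ∀ X : Finset α, 0 < h → h * p ≤ X.card → X.card ≤ h * q →
    ∃ P : Fin h → Finset α,
      (∀ i j : Fin h, i ≠ j → Disjoint (P i) (P j)) ∧
      (Finset.univ.biUnion P = X) ∧
      (∀ i, p ≤ (P i).card ∧ (P i).card ≤ q) := by
  intro h
  induction h with
  | zero => intro X h0; simp at h0
  | succ h ih =>
    intro X _ h1 h2
    rcases Nat.eq_zero_or_pos h with rfl | hpos
    · refine ⟨fun _ => X, ?_, ?_, ?_⟩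
      · intro i j hij; exact absurd (Fin.ext (by omega)) hij
      · ext x; simp
      · intro _
        show p ≤ X.card ∧ X.card ≤ q
        omega
    · have e1 : (h + 1) * p = h * p + p := by ring
      have e2 : (h + 1) * q = h * q + q := by ring
      have hm1 : min q (X.card - h * p) ≤ q := min_le_left _ _
      have hm2 : min q (X.card - h * p) ≤ X.card - h * p := min_le_right _ _
      have hm3 : min q (X.card - h * p) = q ∨ min q (X.card - h * p) = X.card - h * p := by
        rcases le_total q (X.card - h * p) with hle | hle
        · exact Or.inl (min_eq_left hle)
        · exact Or.inr (min_eq_right hle)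
      have hm4 : p ≤ min q (X.card - h * p) := le_min hpq (by omega)
      have hpq2 : h * p ≤ h * q := Nat.mul_le_mul_left h hpq
      obtain ⟨s, hsp, hsq, hsn, hlo, hhi⟩ :
          ∃ s, p ≤ s ∧ s ≤ q ∧ s ≤ X.card ∧ h * p ≤ X.card - s ∧ X.card - s ≤ h * q :=
        ⟨min q (X.card - h * p), by omega, by omega, by omega, by omega,
          by rcases hm3 with he | he <;> rw [he] <;> omega⟩
      obtain ⟨S, hSX, hScard⟩ := Finset.exists_subset_card_eq hsn
      have hdcard : (X \ S).card = X.card - s := by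
        rw [Finset.card_sdiff_of_subset hSX, hScard]
      obtain ⟨P', hd', hu', hb'⟩ := ih (X \ S) hpos (by omega) (by omega)
      have hsub : ∀ i, P' i ⊆ X \ S := by
        intro i
        rw [← hu']
        intro x hx
        exact Finset.mem_biUnion.2 ⟨i, Finset.mem_univ i, hx⟩
      refine ⟨Fin.cons S P', ?_, ?_, ?_⟩
      · intro i j hij
        rcases Fin.eq_zero_or_eq_succ i with rfl | ⟨i', rfl⟩ <;>
          rcases Fin.eq_zero_or_eq_succ j with rfl | ⟨j', rfl⟩
        · exact absurd rfl hij
        · simp only [Fin.cons_zero, Fin.cons_succ]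
          exact Finset.disjoint_left.2 fun x hx hx' =>
            (Finset.mem_sdiff.1 (hsub j' hx')).2 hx
        · simp only [Fin.cons_zero, Fin.cons_succ]
          exact Finset.disjoint_left.2 fun x hx hx' =>
            (Finset.mem_sdiff.1 (hsub i' hx)).2 hx'
        · simp only [Fin.cons_succ]
          exact hd' i' j' fun e => hij (congrArg Fin.succ e)
      · ext x
        simp only [Finset.mem_biUnion, Finset.mem_univ, true_and]
        rw [Fin.exists_fin_succ]
        simp only [Fin.cons_zero, Fin.cons_succ]
        constructor
        · rintro (hx | ⟨i, hi⟩)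
          · exact hSX hx
          · exact (Finset.mem_sdiff.1 (hsub i hi)).1
        · intro hx
          by_cases hxS : x ∈ S
          · exact Or.inl hxS
          · have hmem : x ∈ X \ S := Finset.mem_sdiff.2 ⟨hx, hxS⟩
            rw [← hu'] at hmem
            obtain ⟨i, _, hi⟩ := Finset.mem_biUnion.1 hmem
            exact Or.inr ⟨i, hi⟩
      · intro i
        rcases Fin.eq_zero_or_eq_succ i with rfl | ⟨i', rfl⟩
        · simp only [Fin.cons_zero, hScard]; omega
        · simpa using hb' i'

/-- A finite set `X` can be partitioned into `h` subsets, each of size at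
least `p` and at most `q`, if and only if `⌈|X|/q⌉ ≤ h ≤ ⌊|X|/p⌋`. -/
theorem partition_into_bounded_blocks_iff
    {α : Type*} [DecidableEq α]
    (p q h : ℕ) (hp : 0 < p) (hpq : p ≤ q) (hh : 0 < h)
    (X : Finset α) :
    (∃ P : Fin h → Finset α,
      (∀ i j : Fin h, i ≠ j → Disjoint (P i) (P j)) ∧
      (Finset.univ.biUnion P = X) ∧
      (∀ i, p ≤ (P i).card ∧ (P i).card ≤ q)) ↔
    (⌈(X.card : ℚ) / (q : ℚ)⌉ ≤ (h : ℤ) ∧ (h : ℤ) ≤ ⌊(X.card : ℚ) / (p : ℚ)⌋) := by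
  have hq : 0 < q := lt_of_lt_of_le hp hpq
  have hqQ : (0:ℚ) < (q:ℚ) := by exact_mod_cast hq
  have hpQ : (0:ℚ) < (p:ℚ) := by exact_mod_cast hp
  have key : (⌈(X.card : ℚ) / (q : ℚ)⌉ ≤ (h : ℤ) ∧ (h : ℤ) ≤ ⌊(X.card : ℚ) / (p : ℚ)⌋)
      ↔ (h * p ≤ X.card ∧ X.card ≤ h * q) := by
    rw [Int.ceil_le, Int.le_floor, div_le_iff₀ hqQ, le_div_iff₀ hpQ]
    constructor
    · rintro ⟨a, b⟩
      exact ⟨by exact_mod_cast b, by exact_mod_cast a⟩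
    · rintro ⟨a, b⟩
      exact ⟨by exact_mod_cast b, by exact_mod_cast a⟩
  rw [key]
  constructor
  · rintro ⟨P, hd, hu, hb⟩
    have hcard : X.card = ∑ i, (P i).card := by
      rw [← hu, Finset.card_biUnion]
      intro i _ j _ hij
      exact hd i j hij
    have h1 : ∑ _i : Fin h, p ≤ ∑ i, (P i).card :=
      Finset.sum_le_sum fun i _ => (hb i).1
    have h2 : ∑ i, (P i).card ≤ ∑ _i : Fin h, q :=
      Finset.sum_le_sum fun i _ => (hb i).2
    simp only [Finset.sum_const, Finset.card_univ, Fintype.card_fin, smul_eq_mul] at h1 h2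
    omega
  · rintro ⟨h1, h2⟩
    exact partition_aux p q hp hpq h X hh h1 h2
end

section
/- Let J = {J_1,…,J_s} be the set of initial clusters of A and let I = {I_1,…,I_k} be a k-clustering of A. Then there exists a k-clustering I' = {I'_1,…,I'_k} of A such that (i) |I'_i| = |I_i| for all i ∈ {1,…,k}, (ii) cost(I'_1,…,I'_k) ≤ cost(I_1,…,I_k), and (iii) the bipartite intersection graph G(I',J) — whose vertex set is the disjoint union of {I'_1,…,I'_k} and {J_1,…,J_s}, with I'_i adjacent to J_p if and only if I'_i ∩ J_p ≠ ∅ — is acyclic (a forest). -/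
/-- The cost of a `k`-clustering: the minimum over all choices of medians
`c_1, ..., c_k ∈ α^m` of `∑ i, ∑ j ∈ I i, d_H (c i) (a j)`. -/
noncomputable def clusterCost {α : Type*} [Fintype α] [DecidableEq α] {m n k : ℕ}
    (a : Fin n → Fin m → α) (I : Fin k → Finset (Fin n)) : ℕ :=
  sInf {B : ℕ | ∃ c : Fin k → Fin m → α, ∑ i, ∑ j ∈ I i, hammingDist (c i) (a j) = B}

set_option linter.unusedSectionVars false
set_option maxHeartbeats 1000000

namespace AcyclicAux

variable {α : Type*} [Fintype α] [Nonempty α] [DecidableEq α] {m n k s : ℕ}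

def fsucc {r : ℕ} (t : Fin r) : Fin r :=
  ⟨(t.val + 1) % r, Nat.mod_lt _ (Nat.lt_of_le_of_lt (Nat.zero_le _) t.isLt)⟩

def fpred {r : ℕ} (t : Fin r) : Fin r :=
  ⟨(t.val + (r - 1)) % r, Nat.mod_lt _ (Nat.lt_of_le_of_lt (Nat.zero_le _) t.isLt)⟩

lemma fsucc_val {r : ℕ} (t : Fin r) : (fsucc t).val = (t.val + 1) % r := rfl

lemma fsucc_fpred {r : ℕ} (t : Fin r) : fsucc (fpred t) = t := by
  have hr : 0 < r := Nat.lt_of_le_of_lt (Nat.zero_le _) t.isLt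
  have ht := t.isLt
  apply Fin.ext
  show ((t.val + (r - 1)) % r + 1) % r = t.val
  rcases Nat.eq_zero_or_pos t.val with h | h
  · rw [h]
    simp only [Nat.zero_add]
    rw [Nat.mod_eq_of_lt (show r - 1 < r by omega), Nat.sub_add_cancel hr, Nat.mod_self]
  · have : (t.val + (r - 1)) % r = t.val - 1 := by
      have : t.val + (r - 1) = r + (t.val - 1) := by omega
      rw [this, Nat.add_mod_left, Nat.mod_eq_of_lt (by omega)]
    rw [this, Nat.sub_add_cancel h, Nat.mod_eq_of_lt ht]

lemma fpred_fsucc {r : ℕ} (t : Fin r) : fpred (fsucc t) = t := by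
  have hr : 0 < r := Nat.lt_of_le_of_lt (Nat.zero_le _) t.isLt
  have ht := t.isLt
  apply Fin.ext
  show ((t.val + 1) % r + (r - 1)) % r = t.val
  rcases Nat.lt_or_ge (t.val + 1) r with h | h
  · rw [Nat.mod_eq_of_lt h]
    have : t.val + 1 + (r - 1) = r + t.val := by omega
    rw [this, Nat.add_mod_left, Nat.mod_eq_of_lt ht]
  · have h1 : t.val + 1 = r := by omega
    rw [h1, Nat.mod_self, Nat.zero_add, Nat.mod_eq_of_lt (by omega)]
    omega

lemma fsucc_ne {r : ℕ} (hr : 2 ≤ r) (t : Fin r) : fsucc t ≠ t := by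
  intro h
  have := congrArg Fin.val h
  rw [fsucc_val] at this
  have ht := t.isLt
  rcases Nat.lt_or_ge (t.val + 1) r with h2 | h2
  · rw [Nat.mod_eq_of_lt h2] at this; omega
  · have h1 : t.val + 1 = r := by omega
    rw [h1, Nat.mod_self] at this; omega

lemma formPerm_ofFn_apply {n r : ℕ} (xs : Fin r → Fin n) (hinj : Function.Injective xs)
    (t : Fin r) : (List.ofFn xs).formPerm (xs t) = xs (fsucc t) := by
  have hnd : (List.ofFn xs).Nodup := List.nodup_ofFn.mpr hinj
  have hlen : (List.ofFn xs).length = r := List.length_ofFn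
  have ht : (t : ℕ) < (List.ofFn xs).length := by rw [hlen]; exact t.isLt
  have h1 : (List.ofFn xs)[(t : ℕ)] = xs t := by rw [List.getElem_ofFn]
  have h2 := List.formPerm_apply_getElem (List.ofFn xs) hnd t ht
  rw [h1] at h2
  rw [h2, List.getElem_ofFn]
  congr 1
  apply Fin.ext
  simp only [fsucc_val, hlen]

lemma formPerm_ofFn_apply_of_not_mem {n r : ℕ} (xs : Fin r → Fin n) (z : Fin n)
    (hz : z ∉ Set.range xs) : (List.ofFn xs).formPerm z = z := by
  apply List.formPerm_apply_of_notMem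
  rw [List.mem_ofFn]
  exact hz



/-- clusters as fibers of an assignment function -/
def fib (f : Fin n → Fin k) (i : Fin k) : Finset (Fin n) :=
  Finset.univ.filter (fun z => f z = i)

lemma mem_fib {f : Fin n → Fin k} {i : Fin k} {z : Fin n} : z ∈ fib f i ↔ f z = i := by
  simp [fib]

/-- total cost for a fixed family of medians -/
def CC (a : Fin n → Fin m → α) (f : Fin n → Fin k) (c : Fin k → Fin m → α) : ℕ :=
  ∑ z, hammingDist (c (f z)) (a z)

lemma clusterCost_fib (a : Fin n → Fin m → α) (f : Fin n → Fin k) :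
    clusterCost a (fib f) = sInf {B : ℕ | ∃ c : Fin k → Fin m → α, CC a f c = B} := by
  unfold clusterCost
  congr 1
  ext B
  constructor
  · rintro ⟨c, rfl⟩
    refine ⟨c, ?_⟩
    unfold CC
    rw [← Finset.sum_fiberwise Finset.univ f (fun z => hammingDist (c (f z)) (a z))]
    refine (Finset.sum_congr rfl (fun i _ => Finset.sum_congr rfl (fun j hj => ?_))).symm
    rw [(Finset.mem_filter.mp hj).2]
  · rintro ⟨c, rfl⟩
    refine ⟨c, ?_⟩
    unfold CC
    rw [← Finset.sum_fiberwise Finset.univ f (fun z => hammingDist (c (f z)) (a z))]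
    refine Finset.sum_congr rfl (fun i _ => Finset.sum_congr rfl (fun j hj => ?_))
    rw [(Finset.mem_filter.mp hj).2]

lemma clusterCost_fib_le (a : Fin n → Fin m → α) (f : Fin n → Fin k) (c : Fin k → Fin m → α) :
    clusterCost a (fib f) ≤ CC a f c := by
  rw [clusterCost_fib]
  exact Nat.sInf_le ⟨c, rfl⟩

lemma exists_opt (a : Fin n → Fin m → α) (f : Fin n → Fin k) :
    ∃ c : Fin k → Fin m → α, CC a f c = clusterCost a (fib f) := by
  rw [clusterCost_fib]
  have hne : {B : ℕ | ∃ c : Fin k → Fin m → α, CC a f c = B}.Nonempty := by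
    inhabit α
    exact ⟨_, (fun _ _ => default), rfl⟩
  exact Nat.sInf_mem hne

/-- fibers of a composition with a permutation have the same cards -/
lemma card_fib_comp (f : Fin n → Fin k) (e : Equiv.Perm (Fin n)) (i : Fin k) :
    (fib (f ∘ e) i).card = (fib f i).card := by
  have : fib (f ∘ e) i = (fib f i).image e.symm := by
    ext z
    simp only [mem_fib, Finset.mem_image, Function.comp_apply]
    constructor
    · intro h; exact ⟨e z, h, by simp⟩
    · rintro ⟨w, hw, rfl⟩; simpa using hw
  rw [this, Finset.card_image_of_injective _ e.symm.injective]

variable (J : Fin s → Finset (Fin n))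

/-- the set of edges of the intersection graph -/
def Efin (f : Fin n → Fin k) : Finset (Fin k × Fin s) :=
  Finset.univ.filter (fun ip => ((fib f ip.1) ∩ J ip.2).Nonempty)

lemma Efin_card_le (f : Fin n → Fin k) : (Efin J f).card ≤ k * s := by
  calc (Efin J f).card ≤ (Finset.univ : Finset (Fin k × Fin s)).card := Finset.card_filter_le _ _
  _ = k * s := by simp

lemma fsucc_injective {r : ℕ} : Function.Injective (fsucc (r := r)) := by
  intro a b h
  rw [← fpred_fsucc a, h, fpred_fsucc]

lemma CC_decomp (a : Fin n → Fin m → α) (g : Fin n → Fin k) (c : Fin k → Fin m → α)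
    {r : ℕ} (xs : Fin r → Fin n) (hinj : Function.Injective xs) :
    CC a g c = (∑ t, hammingDist (c (g (xs t))) (a (xs t))) +
      ∑ z ∈ (Finset.univ.image xs)ᶜ, hammingDist (c (g z)) (a z) := by
  unfold CC
  rw [← Finset.sum_add_sum_compl (Finset.univ.image xs) (fun z => hammingDist (c (g z)) (a z))]
  congr 1
  rw [Finset.sum_image (fun x _ y _ h => hinj h)]

lemma shift_step (a : Fin n → Fin m → α) (J : Fin s → Finset (Fin n))
    (hJd : ∀ p q : Fin s, p ≠ q → Disjoint (J p) (J q))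
    (hJa : ∀ p : Fin s, ∀ x ∈ J p, ∀ y ∈ J p, a x = a y)
    {r : ℕ} (hr : 2 ≤ r) (ii : Fin r → Fin k) (pp : Fin r → Fin s)
    (hii : Function.Injective ii) (hpp : Function.Injective pp)
    (f : Fin n → Fin k)
    (hQ : ∀ t, ((fib f (ii t)) ∩ J (pp t)).Nonempty ∧
      ((fib f (ii (fsucc t))) ∩ J (pp t)).Nonempty) :
    ∃ fp fm : Fin n → Fin k,
      (∀ i, (fib fp i).card = (fib f i).card) ∧
      (∀ i, (fib fm i).card = (fib f i).card) ∧
      clusterCost a (fib fp) + clusterCost a (fib fm) ≤ 2 * clusterCost a (fib f) ∧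
      (∀ i p, ((fib fp i) ∩ J p).Nonempty → ((fib f i) ∩ J p).Nonempty) ∧
      (∀ t, ((fib fp (ii (fsucc t))) ∩ J (pp t)).card + 1
        = ((fib f (ii (fsucc t))) ∩ J (pp t)).card) := by
  have hJuniq : ∀ (z : Fin n) (p q : Fin s), z ∈ J p → z ∈ J q → p = q := by
    intro z p q h1 h2
    by_contra hne
    exact (Finset.disjoint_left.mp (hJd p q hne)) h1 h2
  choose xs hxs using fun t => (hQ t).2
  choose ys hys using fun t => (hQ t).1
  have hxf : ∀ t, f (xs t) = ii (fsucc t) := fun t => mem_fib.mp (Finset.mem_inter.mp (hxs t)).1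
  have hxJ : ∀ t, xs t ∈ J (pp t) := fun t => (Finset.mem_inter.mp (hxs t)).2
  have hyf : ∀ t, f (ys t) = ii t := fun t => mem_fib.mp (Finset.mem_inter.mp (hys t)).1
  have hyJ : ∀ t, ys t ∈ J (pp t) := fun t => (Finset.mem_inter.mp (hys t)).2
  have memJ_inj : ∀ (w : Fin r → Fin n), (∀ t, w t ∈ J (pp t)) → Function.Injective w := by
    intro w hw t u h
    by_contra hne
    exact (Finset.disjoint_left.mp (hJd _ _ (fun e => hne (hpp e)))) (hw t) (h ▸ hw u)
  have hxinj := memJ_inj xs hxJ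
  have hyinj := memJ_inj ys hyJ
  set σ := (List.ofFn xs).formPerm with hσdef
  set τ := (List.ofFn ys).formPerm with hτdef
  have hσx : ∀ t, σ (xs t) = xs (fsucc t) := formPerm_ofFn_apply xs hxinj
  have hτy : ∀ t, τ (ys t) = ys (fsucc t) := formPerm_ofFn_apply ys hyinj
  have hσinv : ∀ t, σ⁻¹ (xs t) = xs (fpred t) := by
    intro t
    rw [Equiv.Perm.inv_eq_iff_eq, hσx, fsucc_fpred]
  have hσinvnot : ∀ z, z ∉ Set.range xs → σ⁻¹ z = z := fun z hz => by
    rw [Equiv.Perm.inv_eq_iff_eq, formPerm_ofFn_apply_of_not_mem xs z hz]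
  have hτnot : ∀ z, z ∉ Set.range ys → τ z = z := fun z hz =>
    formPerm_ofFn_apply_of_not_mem ys z hz
  have hfpx : ∀ t, (f ∘ ⇑σ⁻¹) (xs t) = ii t := by
    intro t
    simp only [Function.comp_apply, hσinv, hxf, fsucc_fpred]
  have hfpnot : ∀ z, z ∉ Set.range xs → (f ∘ ⇑σ⁻¹) z = f z := by
    intro z hz
    simp only [Function.comp_apply, hσinvnot z hz]
  have hfmy : ∀ t, (f ∘ ⇑τ) (ys t) = ii (fsucc t) := by
    intro t
    simp only [Function.comp_apply, hτy, hyf]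
  have hfmnot : ∀ z, z ∉ Set.range ys → (f ∘ ⇑τ) z = f z := by
    intro z hz
    simp only [Function.comp_apply, hτnot z hz]
  have hcomplx : ∀ z ∈ (Finset.univ.image xs)ᶜ, z ∉ Set.range xs := by
    intro z hz
    rw [Finset.mem_compl] at hz
    rintro ⟨t, rfl⟩
    exact hz (Finset.mem_image_of_mem xs (Finset.mem_univ t))
  have hcomply : ∀ z ∈ (Finset.univ.image ys)ᶜ, z ∉ Set.range ys := by
    intro z hz
    rw [Finset.mem_compl] at hz
    rintro ⟨t, rfl⟩
    exact hz (Finset.mem_image_of_mem ys (Finset.mem_univ t))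
  refine ⟨f ∘ ⇑σ⁻¹, f ∘ ⇑τ, fun i => card_fib_comp f σ⁻¹ i, fun i => card_fib_comp f τ i,
    ?_, ?_, ?_⟩
  · -- cost inequality
    obtain ⟨c₀, hc₀⟩ := exists_opt a f
    set Rx := ∑ z ∈ (Finset.univ.image xs)ᶜ, hammingDist (c₀ (f z)) (a z) with hRx
    set Ry := ∑ z ∈ (Finset.univ.image ys)ᶜ, hammingDist (c₀ (f z)) (a z) with hRy
    have d1 : CC a (f ∘ ⇑σ⁻¹) c₀ = (∑ t, hammingDist (c₀ (ii t)) (a (xs t))) + Rx := by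
      rw [CC_decomp a _ c₀ xs hxinj]
      congr 1
      · exact Finset.sum_congr rfl fun t _ => by rw [hfpx t]
      · exact Finset.sum_congr rfl fun z hz => by rw [hfpnot z (hcomplx z hz)]
    have d2 : CC a f c₀ = (∑ t, hammingDist (c₀ (ii (fsucc t))) (a (xs t))) + Rx := by
      rw [CC_decomp a f c₀ xs hxinj]
      congr 1
      exact Finset.sum_congr rfl fun t _ => by rw [hxf t]
    have d3 : CC a (f ∘ ⇑τ) c₀ = (∑ t, hammingDist (c₀ (ii (fsucc t))) (a (ys t))) + Ry := by
      rw [CC_decomp a _ c₀ ys hyinj]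
      congr 1
      · exact Finset.sum_congr rfl fun t _ => by rw [hfmy t]
      · exact Finset.sum_congr rfl fun z hz => by rw [hfmnot z (hcomply z hz)]
    have d4 : CC a f c₀ = (∑ t, hammingDist (c₀ (ii t)) (a (ys t))) + Ry := by
      rw [CC_decomp a f c₀ ys hyinj]
      congr 1
      exact Finset.sum_congr rfl fun t _ => by rw [hyf t]
    have haxy : ∀ t, a (xs t) = a (ys t) := fun t => hJa (pp t) _ (hxJ t) _ (hyJ t)
    have e1 : (∑ t, hammingDist (c₀ (ii t)) (a (xs t)))
        = ∑ t, hammingDist (c₀ (ii t)) (a (ys t)) :=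
      Finset.sum_congr rfl fun t _ => by rw [haxy t]
    have e3 : (∑ t, hammingDist (c₀ (ii (fsucc t))) (a (ys t)))
        = ∑ t, hammingDist (c₀ (ii (fsucc t))) (a (xs t)) :=
      Finset.sum_congr rfl fun t _ => by rw [haxy t]
    have key : CC a (f ∘ ⇑σ⁻¹) c₀ + CC a (f ∘ ⇑τ) c₀ = 2 * CC a f c₀ := by
      omega
    calc clusterCost a (fib (f ∘ ⇑σ⁻¹)) + clusterCost a (fib (f ∘ ⇑τ))
        ≤ CC a (f ∘ ⇑σ⁻¹) c₀ + CC a (f ∘ ⇑τ) c₀ :=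
          Nat.add_le_add (clusterCost_fib_le a _ c₀) (clusterCost_fib_le a _ c₀)
      _ = 2 * CC a f c₀ := key
      _ = 2 * clusterCost a (fib f) := by rw [hc₀]
  · -- edge subset
    rintro i p ⟨z, hz⟩
    obtain ⟨hz1, hz2⟩ := Finset.mem_inter.mp hz
    by_cases hzr : z ∈ Set.range xs
    · obtain ⟨u, rfl⟩ := hzr
      have hiu : ii u = i := by rw [← hfpx u]; exact mem_fib.mp hz1
      have hpu : p = pp u := hJuniq _ _ _ hz2 (hxJ u)
      exact ⟨ys u, Finset.mem_inter.mpr ⟨mem_fib.mpr (by rw [hyf u, hiu]),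
        by rw [hpu]; exact hyJ u⟩⟩
    · exact ⟨z, Finset.mem_inter.mpr ⟨mem_fib.mpr (by rw [← hfpnot z hzr]; exact mem_fib.mp hz1),
        hz2⟩⟩
  · -- measure decrease
    intro t
    have hset : fib (f ∘ ⇑σ⁻¹) (ii (fsucc t)) ∩ J (pp t)
        = (fib f (ii (fsucc t)) ∩ J (pp t)).erase (xs t) := by
      ext z
      simp only [Finset.mem_erase, Finset.mem_inter, mem_fib]
      by_cases hzr : z ∈ Set.range xs
      · obtain ⟨u, rfl⟩ := hzr
        constructor
        · rintro ⟨h1, h2⟩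
          exfalso
          have hu1 : u = fsucc t := hii (by rw [← hfpx u]; exact h1)
          have hu2 : u = t := hpp (hJuniq _ _ _ (hxJ u) h2)
          exact fsucc_ne hr t (by rw [← hu1, hu2])
        · rintro ⟨h3, h1, h2⟩
          exfalso
          have hu : u = t := fsucc_injective (hii (by rw [← hxf u]; exact h1))
          exact h3 (by rw [hu])
      · have hzne : z ≠ xs t := fun e => hzr ⟨t, e.symm⟩
        rw [hfpnot z hzr]
        constructor
        · rintro ⟨h1, h2⟩; exact ⟨hzne, h1, h2⟩
        · rintro ⟨_, h1, h2⟩; exact ⟨h1, h2⟩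
    rw [hset, Finset.card_erase_of_mem (hxs t)]
    have hpos : 0 < (fib f (ii (fsucc t)) ∩ J (pp t)).card :=
      Finset.card_pos.mpr ⟨xs t, hxs t⟩
    omega

lemma exists_good (a : Fin n → Fin m → α) (J : Fin s → Finset (Fin n))
    (hJd : ∀ p q : Fin s, p ≠ q → Disjoint (J p) (J q))
    (hJa : ∀ p : Fin s, ∀ x ∈ J p, ∀ y ∈ J p, a x = a y)
    (f0 : Fin n → Fin k) :
    ∃ f : Fin n → Fin k,
      (∀ i, (fib f i).card = (fib f0 i).card) ∧
      clusterCost a (fib f) ≤ clusterCost a (fib f0) ∧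
      ∀ (r : ℕ), 2 ≤ r → ∀ (ii : Fin r → Fin k) (pp : Fin r → Fin s),
        Function.Injective ii → Function.Injective pp →
        ¬ (∀ t, ((fib f (ii t)) ∩ J (pp t)).Nonempty ∧
          ((fib f (ii (fsucc t))) ∩ J (pp t)).Nonempty) := by
  classical
  set B := k * s + 1 with hB
  set φ : (Fin n → Fin k) → ℕ :=
    fun f => clusterCost a (fib f) * B + (Efin J f).card with hφ
  set S : Finset (Fin n → Fin k) :=
    Finset.univ.filter (fun f => ∀ i, (fib f i).card = (fib f0 i).card) with hS
  have hSdef : ∀ f, f ∈ S ↔ ∀ i, (fib f i).card = (fib f0 i).card := by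
    intro f; simp [hS]
  have hf0S : f0 ∈ S := (hSdef f0).mpr (fun i => rfl)
  obtain ⟨fstar, hfS, hmin⟩ := Finset.exists_min_image S φ ⟨f0, hf0S⟩
  have hEfin_lt : ∀ f, (Efin J f).card < B := fun f => Nat.lt_succ_of_le (Efin_card_le J f)
  have hcost_le : ∀ f g : Fin n → Fin k, φ f ≤ φ g →
      clusterCost a (fib f) ≤ clusterCost a (fib g) := by
    intro f g h
    by_contra hlt
    push_neg at hlt
    have h1 : clusterCost a (fib g) * B + B ≤ clusterCost a (fib f) * B := by
      have h2 := Nat.mul_le_mul_right B (Nat.succ_le_of_lt hlt)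
      rw [Nat.succ_mul] at h2
      exact h2
    have h3 := hEfin_lt f
    have h4 := hEfin_lt g
    simp only [hφ] at h
    omega
  have hcost_star : ∀ g ∈ S, clusterCost a (fib fstar) ≤ clusterCost a (fib g) :=
    fun g hg => hcost_le fstar g (hmin g hg)
  refine ⟨fstar, (hSdef fstar).mp hfS, hcost_star f0 hf0S, ?_⟩
  intro r hr ii pp hii hpp hQ
  have ht0 : (0 : ℕ) < r := by omega
  set t0 : Fin r := ⟨0, ht0⟩ with ht0def
  suffices H : ∀ (M : ℕ) (f : Fin n → Fin k), f ∈ S → φ f = φ fstar →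
      (∀ t, ((fib f (ii t)) ∩ J (pp t)).Nonempty ∧
        ((fib f (ii (fsucc t))) ∩ J (pp t)).Nonempty) →
      ((fib f (ii (fsucc t0))) ∩ J (pp t0)).card ≤ M → False by
    exact H _ fstar hfS rfl hQ le_rfl
  intro M
  induction M with
  | zero =>
    intro f hfS' hφf hQ' hM
    have h1 := Finset.card_pos.mpr (hQ' t0).2
    omega
  | succ M ih =>
    intro f hfS' hφf hQ' hM
    obtain ⟨fp, fm, hfpcard, hfmcard, hcost, hsub, hdec⟩ :=
      shift_step a J hJd hJa hr ii pp hii hpp f hQ'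
    have hfpS : fp ∈ S := (hSdef fp).mpr (fun i => by rw [hfpcard i, (hSdef f).mp hfS' i])
    have hfmS : fm ∈ S := (hSdef fm).mpr (fun i => by rw [hfmcard i, (hSdef f).mp hfS' i])
    have hcf : clusterCost a (fib f) = clusterCost a (fib fstar) :=
      le_antisymm (hcost_le f fstar (le_of_eq hφf)) (hcost_star f hfS')
    have hcp := hcost_star fp hfpS
    have hcm := hcost_star fm hfmS
    have hcpe : clusterCost a (fib fp) = clusterCost a (fib f) := by omega
    have hEsub : Efin J fp ⊆ Efin J f := by
      intro ip hip
      simp only [Efin, Finset.mem_filter] at hip ⊢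
      exact ⟨Finset.mem_univ _, hsub ip.1 ip.2 hip.2⟩
    have hφfp := hmin fp hfpS
    have hEge : (Efin J f).card ≤ (Efin J fp).card := by
      have h1 : φ f ≤ φ fp := hφf ▸ hφfp
      simp only [hφ] at h1
      rw [hcpe] at h1
      omega
    have hEeq : Efin J fp = Efin J f := Finset.eq_of_subset_of_card_le hEsub hEge
    have hφfpe : φ fp = φ fstar := by
      have h2 : (Efin J fp).card = (Efin J f).card := by rw [hEeq]
      simp only [hφ] at hφf ⊢
      rw [hcpe, h2]
      exact hφf
    have hQp : ∀ t, ((fib fp (ii t)) ∩ J (pp t)).Nonempty ∧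
        ((fib fp (ii (fsucc t))) ∩ J (pp t)).Nonempty := by
      intro t
      constructor
      · have m1 : (ii t, pp t) ∈ Efin J f := by
          simp only [Efin, Finset.mem_filter]
          exact ⟨Finset.mem_univ _, (hQ' t).1⟩
        rw [← hEeq] at m1
        exact (Finset.mem_filter.mp m1).2
      · have m1 : (ii (fsucc t), pp t) ∈ Efin J f := by
          simp only [Efin, Finset.mem_filter]
          exact ⟨Finset.mem_univ _, (hQ' t).2⟩
        rw [← hEeq] at m1
        exact (Finset.mem_filter.mp m1).2
    have hd := hdec t0
    exact ih fp hfpS hφfpe hQp (by omega)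

lemma getVert_eq_support_getElem {V : Type*} {G : SimpleGraph V} {u v : V} (p : G.Walk u v)
    (j : ℕ) (h : j < p.length + 1) :
    p.getVert j = p.support[j]'(by rw [SimpleGraph.Walk.length_support]; exact h) := by
  induction p generalizing j with
  | nil =>
    have hj : j = 0 := by simp at h; omega
    subst hj
    simp [SimpleGraph.Walk.getVert_zero]
  | @cons u' v' w' adj q ih =>
    cases j with
    | zero => simp [SimpleGraph.Walk.getVert_zero]
    | succ j =>
      simp only [SimpleGraph.Walk.support_cons, SimpleGraph.Walk.getVert_cons_succ,
        List.getElem_cons_succ]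
      exact ih j (by simp at h; omega)

lemma cycle_getVert_inj {V : Type*} {G : SimpleGraph V} {v : V} {c : G.Walk v v}
    (hc : c.IsCycle) {j1 j2 : ℕ} (h1 : j1 < c.length) (h2 : j2 < c.length)
    (he : c.getVert j1 = c.getVert j2) : j1 = j2 := by
  have hnd := hc.support_nodup
  have hlen1 : 1 ≤ c.length := by have := hc.three_le_length; omega
  have htl : c.support.tail.length = c.length := by
    rw [List.length_tail, SimpleGraph.Walk.length_support]
    omega
  have hget : ∀ (j : ℕ) (hj1 : 1 ≤ j) (hj2 : j ≤ c.length),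
      c.support.tail[j-1]'(by omega) = c.getVert j := by
    intro j hj1 hj2
    rw [List.getElem_tail]
    have hidx : j - 1 + 1 = j := by omega
    have hgv := getVert_eq_support_getElem c j (by omega)
    rw [hgv]
    congr 1
  suffices H : ∀ j1 j2, j1 < j2 → j2 < c.length → c.getVert j1 = c.getVert j2 → False by
    rcases Nat.lt_trichotomy j1 j2 with hlt | heq | hgt
    · exact (H j1 j2 hlt h2 he).elim
    · exact heq
    · exact (H j2 j1 hgt h1 he.symm).elim
  intro j1 j2 hlt hj2 he
  rcases Nat.eq_zero_or_pos j1 with hz | hpos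
  · subst hz
    have hj21 : 1 ≤ j2 := by omega
    have hv2 : c.support.tail[j2-1]'(by omega) = c.support.tail[c.length-1]'(by omega) := by
      rw [hget j2 hj21 (by omega), hget c.length hlen1 le_rfl]
      rw [← he, SimpleGraph.Walk.getVert_zero, SimpleGraph.Walk.getVert_length]
    have := (List.Nodup.getElem_inj_iff hnd).mp hv2
    omega
  · have hv2 : c.support.tail[j1-1]'(by omega) = c.support.tail[j2-1]'(by omega) := by
      rw [hget j1 hpos (by omega), hget j2 (by omega) (by omega)]
      exact he
    have := (List.Nodup.getElem_inj_iff hnd).mp hv2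
    omega

lemma cycle_extract {k s : ℕ} (Q : Fin k → Fin s → Prop)
    (h : ¬ (SimpleGraph.fromRel (fun x y : Fin k ⊕ Fin s =>
        ∃ i p, x = Sum.inl i ∧ y = Sum.inr p ∧ Q i p)).IsAcyclic) :
    ∃ r : ℕ, 2 ≤ r ∧ ∃ (ii : Fin r → Fin k) (pp : Fin r → Fin s),
      Function.Injective ii ∧ Function.Injective pp ∧
      ∀ t, Q (ii t) (pp t) ∧ Q (ii (fsucc t)) (pp t) := by
  classical
  set G := SimpleGraph.fromRel (fun x y : Fin k ⊕ Fin s =>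
      ∃ i p, x = Sum.inl i ∧ y = Sum.inr p ∧ Q i p) with hG
  have hAdj : ∀ u w : Fin k ⊕ Fin s, G.Adj u w ↔
      (∃ i p, u = Sum.inl i ∧ w = Sum.inr p ∧ Q i p) ∨
      (∃ i p, w = Sum.inl i ∧ u = Sum.inr p ∧ Q i p) := by
    intro u w
    rw [hG, SimpleGraph.fromRel_adj]
    constructor
    · rintro ⟨-, hh⟩; exact hh
    · intro hh
      refine ⟨?_, hh⟩
      rcases hh with ⟨i, p, rfl, rfl, -⟩ | ⟨i, p, rfl, rfl, -⟩ <;> simp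
  rw [SimpleGraph.IsAcyclic] at h
  push_neg at h
  obtain ⟨v, c, hc⟩ := h
  obtain ⟨i0, c', hc'⟩ : ∃ (i0 : Fin k) (c' : G.Walk (Sum.inl i0) (Sum.inl i0)),
      c'.IsCycle := by
    cases v with
    | inl i0 => exact ⟨i0, c, hc⟩
    | inr p0 =>
      have hlen := hc.three_le_length
      have hadj := c.adj_getVert_succ (show 0 < c.length by omega)
      rw [SimpleGraph.Walk.getVert_zero] at hadj
      rcases (hAdj _ _).mp hadj with ⟨i, p, h1, h2, hq⟩ | ⟨i, p, h1, h2, hq⟩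
      · exact absurd h1 (by simp)
      · have hmem : c.getVert 1 ∈ c.support := by
          rw [getVert_eq_support_getElem c 1 (by omega)]
          exact List.getElem_mem _
        refine ⟨i, (c.rotate _ hmem).copy h1 h1, ?_⟩
        rw [SimpleGraph.Walk.isCycle_copy]
        exact hc.rotate hmem
  clear hc c
  set L := c'.length with hL
  have hL3 : 3 ≤ L := hc'.three_le_length
  have hside : ∀ j, j ≤ L → ((c'.getVert j).isLeft = true ↔ j % 2 = 0) := by
    intro j
    induction j with
    | zero => intro _; simp
    | succ j ihj =>
      intro hj
      have hthis := ihj (by omega)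
      have hadj := c'.adj_getVert_succ (show j < L by omega)
      rcases (hAdj _ _).mp hadj with ⟨i, p, h1, h2, -⟩ | ⟨i, p, h1, h2, -⟩
      · rw [h1] at hthis
        rw [h2]
        simp only [Sum.isLeft_inl, true_eq_decide_iff, Sum.isLeft_inr, false_eq_decide_iff] at hthis ⊢
        simp at hthis ⊢
        omega
      · rw [h2] at hthis
        rw [h1]
        simp at hthis ⊢
        omega
  have hLeven : L % 2 = 0 := by
    have hvl : c'.getVert L = Sum.inl i0 := c'.getVert_length
    exact (hside L le_rfl).mp (by rw [hvl]; simp)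
  obtain ⟨r, hLr⟩ : ∃ r, L = 2 * r := ⟨L/2, by omega⟩
  have hr2 : 2 ≤ r := by omega
  have hex1 : ∀ t : Fin r, ∃ i, c'.getVert (2 * t.val) = Sum.inl i := by
    intro t
    have h2t : 2 * t.val ≤ L := by have := t.isLt; omega
    have hleft := (hside _ h2t).mpr (by omega)
    cases hgv : c'.getVert (2 * t.val) with
    | inl i => exact ⟨i, rfl⟩
    | inr p => rw [hgv] at hleft; simp at hleft
  have hex2 : ∀ t : Fin r, ∃ p, c'.getVert (2 * t.val + 1) = Sum.inr p := by
    intro t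
    have h2t : 2 * t.val + 1 ≤ L := by have := t.isLt; omega
    have hleft := hside _ h2t
    cases hgv : c'.getVert (2 * t.val + 1) with
    | inr p => exact ⟨p, rfl⟩
    | inl i =>
      rw [hgv] at hleft
      simp at hleft
  choose ii hii using hex1
  choose pp hpp using hex2
  have hiinj : Function.Injective ii := by
    intro t u hh
    have heq : c'.getVert (2 * t.val) = c'.getVert (2 * u.val) := by
      rw [hii t, hii u, hh]
    have hb1 : 2 * t.val < L := by have := t.isLt; omega
    have hb2 : 2 * u.val < L := by have := u.isLt; omega
    have := cycle_getVert_inj hc' hb1 hb2 heq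
    exact Fin.ext (by omega)
  have hpinj : Function.Injective pp := by
    intro t u hh
    have heq : c'.getVert (2 * t.val + 1) = c'.getVert (2 * u.val + 1) := by
      rw [hpp t, hpp u, hh]
    have hb1 : 2 * t.val + 1 < L := by have := t.isLt; omega
    have hb2 : 2 * u.val + 1 < L := by have := u.isLt; omega
    have := cycle_getVert_inj hc' hb1 hb2 heq
    exact Fin.ext (by omega)
  refine ⟨r, hr2, ii, pp, hiinj, hpinj, ?_⟩
  intro t
  constructor
  · have hadj := c'.adj_getVert_succ (show 2 * t.val < L by have := t.isLt; omega)
    rw [hii t, hpp t] at hadj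
    rcases (hAdj _ _).mp hadj with ⟨i, p, h1, h2, hq⟩ | ⟨i, p, h1, h2, hq⟩
    · obtain rfl : ii t = i := Sum.inl_injective h1
      obtain rfl : pp t = p := Sum.inr_injective h2
      exact hq
    · exact absurd h2 (by simp)
  · have hadj := c'.adj_getVert_succ (show 2 * t.val + 1 < L by have := t.isLt; omega)
    have hnext : c'.getVert (2 * t.val + 1 + 1) = Sum.inl (ii (fsucc t)) := by
      rcases Nat.lt_or_ge (t.val + 1) r with hltr | hger
      · have hfs : (fsucc t).val = t.val + 1 := by
          rw [fsucc_val, Nat.mod_eq_of_lt hltr]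
        have hgv := hii (fsucc t)
        rw [hfs] at hgv
        have : 2 * (t.val + 1) = 2 * t.val + 1 + 1 := by omega
        rw [this] at hgv
        exact hgv
      · have hteq : t.val + 1 = r := by have := t.isLt; omega
        have hfs0 : (fsucc t).val = 0 := by rw [fsucc_val, hteq, Nat.mod_self]
        have h2t2 : 2 * t.val + 1 + 1 = L := by omega
        rw [h2t2]
        have hgv := hii (fsucc t)
        rw [hfs0] at hgv
        simp only [Nat.mul_zero] at hgv
        rw [SimpleGraph.Walk.getVert_zero] at hgv
        rw [c'.getVert_length]
        exact hgv
    rw [hpp t, hnext] at hadj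
    rcases (hAdj _ _).mp hadj with ⟨i, p, h1, h2, hq⟩ | ⟨i, p, h1, h2, hq⟩
    · exact absurd h1 (by simp)
    · obtain rfl : ii (fsucc t) = i := Sum.inl_injective h1
      obtain rfl : pp t = p := Sum.inr_injective h2
      exact hq

end AcyclicAux

open AcyclicAux in
/-- Every `k`-clustering can be replaced by one with the same cluster sizes,
no larger cost, and whose bipartite intersection graph with the initial clusters is a
forest. -/
theorem exists_acyclic_clustering
    {α : Type*} [Fintype α] [Nonempty α] [DecidableEq α]
    (m n k s : ℕ) (hm : 0 < m) (hn : 0 < n) (hk : 0 < k)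
    (a : Fin n → Fin m → α)
    -- the initial clusters J_1, ..., J_s of A
    (J : Fin s → Finset (Fin n))
    (hJne : ∀ p, (J p).Nonempty)
    (hJclass : ∀ p, ∀ x ∈ J p, ∀ y : Fin n, (y ∈ J p ↔ a y = a x))
    (hJdisj : ∀ p q : Fin s, p ≠ q → Disjoint (J p) (J q))
    (hJcover : ∀ x : Fin n, ∃ p, x ∈ J p)
    -- a k-clustering
    (I : Fin k → Finset (Fin n))
    (hdisj : ∀ i j : Fin k, i ≠ j → Disjoint (I i) (I j))
    (hcover : ∀ x : Fin n, ∃ i, x ∈ I i) :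
    ∃ I' : Fin k → Finset (Fin n),
      (∀ i j : Fin k, i ≠ j → Disjoint (I' i) (I' j)) ∧
      (∀ x : Fin n, ∃ i, x ∈ I' i) ∧
      (∀ i, (I' i).card = (I i).card) ∧
      clusterCost a I' ≤ clusterCost a I ∧
      (SimpleGraph.fromRel (fun (x y : Fin k ⊕ Fin s) =>
        ∃ i p, x = Sum.inl i ∧ y = Sum.inr p ∧ (I' i ∩ J p).Nonempty)).IsAcyclic := by
  classical
  have hJa : ∀ p : Fin s, ∀ x ∈ J p, ∀ y ∈ J p, a x = a y := by
    intro p x hx y hy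
    exact ((hJclass p x hx y).mp hy).symm
  set f0 : Fin n → Fin k := fun x => (hcover x).choose with hf0def
  have hf0 : ∀ x, x ∈ I (f0 x) := fun x => (hcover x).choose_spec
  have hfib0 : ∀ i, fib f0 i = I i := by
    intro i
    ext x
    rw [mem_fib]
    constructor
    · rintro rfl
      exact hf0 x
    · intro hx
      by_contra hne
      exact (Finset.disjoint_left.mp (hdisj _ _ hne)) (hf0 x) hx
  obtain ⟨f, hcard, hcost, hnocyc⟩ := exists_good a J hJdisj hJa f0
  have hfibeq : fib f0 = I := funext hfib0
  refine ⟨fib f, ?_, ?_, ?_, ?_, ?_⟩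
  · intro i j hne
    rw [Finset.disjoint_left]
    intro z hz1 hz2
    exact hne ((mem_fib.mp hz1).symm.trans (mem_fib.mp hz2))
  · exact fun x => ⟨f x, mem_fib.mpr rfl⟩
  · intro i
    rw [hcard i, hfib0 i]
  · rw [hfibeq] at hcost
    exact hcost
  · by_contra hcyc
    obtain ⟨r, hr, ii, pp, hii, hpp, hQ⟩ :=
      cycle_extract (fun i p => ((fib f i) ∩ J p).Nonempty) hcyc
    exact hnocyc r hr ii pp hii hpp hQ
end

section
/- Let I ⊆ {1,…,n} be nonempty and let c ∈ Σ^m be an optimal median of I, i.e., c minimizes Σ_{h∈I} d_H(·, a_h) over Σ^m. Let s ∈ Σ^m and let j ∈ {1,…,m} be a coordinate with c j ≠ s j. Then at least half of the vectors of the cluster differ from s at coordinate j, i.e., 2·|{h ∈ I : a_h j ≠ s j}| ≥ |I|. -/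
private lemma hamming_as_sum {m : ℕ} {α : Type*} [DecidableEq α] (x y : Fin m → α) :
    hammingDist x y = ∑ i : Fin m, (if x i ≠ y i then 1 else 0) := by
  rw [hammingDist, Finset.card_filter]

/-- If `c` is an optimal median of a nonempty cluster `I` and `c` differs
from `s` at coordinate `j`, then at least half of the vectors of the cluster differ
from `s` at coordinate `j`. -/
theorem optimal_median_majority_coordinate
    {α : Type*} [Fintype α] [Nonempty α] [DecidableEq α]
    (m n : ℕ) (hm : 0 < m) (hn : 0 < n)
    (a : Fin n → Fin m → α)
    (I : Finset (Fin n)) (hI : I.Nonempty)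
    (c : Fin m → α)
    (hopt : ∀ b : Fin m → α,
      ∑ h ∈ I, hammingDist c (a h) ≤ ∑ h ∈ I, hammingDist b (a h))
    (s : Fin m → α) (j : Fin m) (hj : c j ≠ s j) :
    I.card ≤ 2 * (I.filter fun h => a h j ≠ s j).card := by
  set b : Fin m → α := Function.update c j (s j) with hb
  have key : (∑ h ∈ I, if c j ≠ a h j then 1 else 0)
      ≤ ∑ h ∈ I, if s j ≠ a h j then 1 else 0 := by
    have h1 := hopt b
    simp only [hamming_as_sum] at h1
    rw [Finset.sum_comm, Finset.sum_comm (s := I)] at h1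
    have hsplit : ∀ x : Fin m → α,
        ∑ i : Fin m, ∑ h ∈ I, (if x i ≠ a h i then 1 else 0)
          = (∑ h ∈ I, if x j ≠ a h j then 1 else 0)
            + ∑ i ∈ Finset.univ.erase j, ∑ h ∈ I, (if x i ≠ a h i then 1 else 0) := by
      intro x
      rw [← Finset.add_sum_erase _ _ (Finset.mem_univ j)]
    rw [hsplit c, hsplit b] at h1
    have heq : ∑ i ∈ Finset.univ.erase j, ∑ h ∈ I, (if c i ≠ a h i then 1 else 0)
        = ∑ i ∈ Finset.univ.erase j, ∑ h ∈ I, (if b i ≠ a h i then 1 else 0) := by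
      refine Finset.sum_congr rfl fun i hi => ?_
      have : b i = c i := Function.update_of_ne (Finset.ne_of_mem_erase hi) _ _
      rw [this]
    have hbj : b j = s j := Function.update_self _ _ _
    rw [heq, hbj] at h1
    omega
  have hA : (∑ h ∈ I, if s j ≠ a h j then 1 else 0)
      = (I.filter fun h => a h j ≠ s j).card := by
    rw [Finset.card_filter]
    refine Finset.sum_congr rfl fun h _ => ?_
    by_cases hc : a h j = s j <;> simp [hc, Ne, eq_comm]
  have hcomp := Finset.card_filter_add_card_filter_not
    (s := I) (p := fun h => a h j ≠ s j)
  have hC : (I.filter fun h => ¬ a h j ≠ s j).card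
      ≤ ∑ h ∈ I, if c j ≠ a h j then 1 else 0 := by
    rw [Finset.card_filter]
    refine Finset.sum_le_sum fun h _ => ?_
    by_cases hc : a h j = s j
    · simp [hc, hj]
    · simp [hc]
  omega
end

section
/- Let {I_1,…,I_k} be a k-clustering of A and let c_1,…,c_k ∈ Σ^m be optimal medians, i.e., each c_i minimizes Σ_{j∈I_i} d_H(·, a_j) over Σ^m. Let S ⊆ {c_1,…,c_k} be the set of those medians that coincide with some column of A. Then there exists a k-clustering {I'_1,…,I'_k} of A such that (i) |I'_i| = |I_i| for all i ∈ {1,…,k}, (ii) Σ_{i=1}^k Σ_{j∈I'_i} d_H(c_i, a_j) ≤ Σ_{i=1}^k Σ_{j∈I_i} d_H(c_i, a_j), and (iii) for every s ∈ S, letting J = {j ∈ {1,…,n} : a_j = s} be the initial cluster of its column value, there exists i ∈ {1,…,k} such that either J ⊆ I'_i or I'_i ⊊ J. -/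
open Finset

theorem exchange_swap
    {α : Type*} [DecidableEq α]
    {m n k : ℕ}
    (a : Fin n → Fin m → α)
    (c : Fin k → Fin m → α)
    (rep : Fin k → Fin k)
    (hrepeq : ∀ i i', c i = c i' → rep i = rep i')
    (I' : Fin k → Finset (Fin n))
    (hdisj : ∀ i j : Fin k, i ≠ j → Disjoint (I' i) (I' j))
    (hcover : ∀ x : Fin n, ∃ i, x ∈ I' i)
    (i : Fin k) (hrepi : rep i = i)
    (h1 : ((univ.filter fun j : Fin n => a j = c i) \ I' i).Nonempty)
    (h2 : (I' i \ (univ.filter fun j : Fin n => a j = c i)).Nonempty) :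
    ∃ I₂ : Fin k → Finset (Fin n),
      (∀ t u : Fin k, t ≠ u → Disjoint (I₂ t) (I₂ u)) ∧
      (∀ x : Fin n, ∃ t, x ∈ I₂ t) ∧
      (∀ t, (I₂ t).card = (I' t).card) ∧
      (∑ t, ∑ j ∈ I₂ t, hammingDist (c t) (a j)
        ≤ ∑ t, ∑ j ∈ I' t, hammingDist (c t) (a j)) ∧
      (∑ t ∈ univ.filter (fun t => rep t = t),
        ((univ.filter fun j : Fin n => a j = c t) \ I₂ t).card
        < ∑ t ∈ univ.filter (fun t => rep t = t),
        ((univ.filter fun j : Fin n => a j = c t) \ I' t).card) := by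
  obtain ⟨j, hj⟩ := h1
  rw [mem_sdiff, mem_filter] at hj
  obtain ⟨⟨-, haj⟩, hjI⟩ := hj
  obtain ⟨j', hj'⟩ := h2
  rw [mem_sdiff, mem_filter] at hj'
  obtain ⟨hj'I, hj'f⟩ := hj'
  have haj' : a j' ≠ c i := fun h => hj'f ⟨mem_univ _, h⟩
  obtain ⟨s, hsj⟩ := hcover j
  have hsi : s ≠ i := fun h => hjI (h ▸ hsj)
  have hjne : j ≠ j' := fun h => haj' (h ▸ haj)
  set σ := Equiv.swap j j' with hσ
  have hσj : σ j = j' := Equiv.swap_apply_left j j'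
  have hσj' : σ j' = j := Equiv.swap_apply_right j j'
  have hσx : ∀ x, x ≠ j → x ≠ j' → σ x = x := fun x h1 h2 =>
    Equiv.swap_apply_of_ne_of_ne h1 h2
  have hjonly : ∀ t, t ≠ s → j ∉ I' t := fun t ht hmem =>
    Finset.disjoint_left.mp (hdisj t s ht) hmem hsj
  have hj'only : ∀ t, t ≠ i → j' ∉ I' t := fun t ht hmem =>
    Finset.disjoint_left.mp (hdisj t i ht) hmem hj'I
  have hmem2 : ∀ t x, x ∈ (I' t).map σ.toEmbedding ↔ σ x ∈ I' t := by
    intro t x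
    rw [Finset.mem_map]
    constructor
    · rintro ⟨b, hb, rfl⟩
      simpa [hσ] using hb
    · intro h
      exact ⟨σ x, h, by simp [hσ, Equiv.swap_apply_self]⟩
  refine ⟨fun t => (I' t).map σ.toEmbedding, ?_, ?_, ?_, ?_, ?_⟩
  · intro t u htu
    exact (Finset.disjoint_map _).mpr (hdisj t u htu)
  · intro x
    obtain ⟨t, ht⟩ := hcover (σ x)
    exact ⟨t, (hmem2 t x).mpr ht⟩
  · intro t; exact Finset.card_map _
  · -- cost
    have hsum : ∀ t, ∑ x ∈ (I' t).map σ.toEmbedding, hammingDist (c t) (a x)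
        = ∑ x ∈ I' t, hammingDist (c t) (a (σ x)) := fun t =>
      Finset.sum_map _ _ _
    simp only [hsum]
    have hmemi : i ∈ (univ : Finset (Fin k)) := mem_univ i
    rw [← Finset.add_sum_erase _ _ hmemi, ← Finset.add_sum_erase _ _ hmemi]
    have hmems : s ∈ (univ : Finset (Fin k)).erase i := mem_erase.mpr ⟨hsi, mem_univ s⟩
    rw [← Finset.add_sum_erase _ _ hmems, ← Finset.add_sum_erase _ _ hmems]
    have htail : ∑ t ∈ (univ.erase i).erase s, ∑ x ∈ I' t, hammingDist (c t) (a (σ x))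
        = ∑ t ∈ (univ.erase i).erase s, ∑ x ∈ I' t, hammingDist (c t) (a x) := by
      refine Finset.sum_congr rfl fun t ht => Finset.sum_congr rfl fun x hx => ?_
      rw [mem_erase, mem_erase] at ht
      rw [hσx x (fun h => hjonly t ht.1 (h ▸ hx)) (fun h => hj'only t ht.2.1 (h ▸ hx))]
    rw [htail]
    have he : ∑ x ∈ (I' i).erase j', hammingDist (c i) (a (σ x))
        = ∑ x ∈ (I' i).erase j', hammingDist (c i) (a x) := by
      refine Finset.sum_congr rfl fun x hx => ?_
      rw [mem_erase] at hx
      rw [hσx x (fun h => hjI (h ▸ hx.2)) hx.1]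
    have e1 : ∑ x ∈ I' i, hammingDist (c i) (a (σ x))
        = ∑ x ∈ (I' i).erase j', hammingDist (c i) (a x) := by
      rw [← Finset.add_sum_erase _ (fun x => hammingDist (c i) (a (σ x))) hj'I,
        hσj', haj, hammingDist_self, he, Nat.zero_add]
    have e2 : ∑ x ∈ I' i, hammingDist (c i) (a x)
        = hammingDist (c i) (a j') + ∑ x ∈ (I' i).erase j', hammingDist (c i) (a x) :=
      (Finset.add_sum_erase _ _ hj'I).symm
    have hss : ∑ x ∈ I' s, hammingDist (c s) (a (σ x))
        = hammingDist (c s) (a j') + ∑ x ∈ (I' s).erase j, hammingDist (c s) (a x) := by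
      rw [← Finset.add_sum_erase _ (fun x => hammingDist (c s) (a (σ x))) hsj, hσj]
      congr 1
      refine Finset.sum_congr rfl fun x hx => ?_
      rw [mem_erase] at hx
      rw [hσx x hx.1 (fun h => hj'only s hsi (h ▸ hx.2))]
    have hso : ∑ x ∈ I' s, hammingDist (c s) (a x)
        = hammingDist (c s) (a j) + ∑ x ∈ (I' s).erase j, hammingDist (c s) (a x) :=
      (Finset.add_sum_erase _ _ hsj).symm
    have htri : hammingDist (c s) (a j') ≤ hammingDist (c i) (a j') + hammingDist (c s) (a j) := by
      have := hammingDist_triangle (c s) (a j) (a j')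
      rw [haj] at this ⊢
      omega
    rw [e1, e2, hss, hso]
    linarith
  · -- potential decreases
    have hile : ∀ t, t ∈ univ.filter (fun t => rep t = t) →
        ((univ.filter fun x : Fin n => a x = c t) \ (I' t).map σ.toEmbedding).card
        ≤ ((univ.filter fun x : Fin n => a x = c t) \ I' t).card := by
      intro t ht
      rw [mem_filter] at ht
      refine Finset.card_le_card fun x hx => ?_
      rw [mem_sdiff] at hx ⊢
      obtain ⟨hx1, hx2⟩ := hx
      refine ⟨hx1, fun hxt => hx2 ?_⟩
      rw [hmem2]
      rcases eq_or_ne x j with rfl | hxj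
      · -- a x = c t and a j = c i → t = i → contradiction with x ∉ ...? no: then σ j = j' ∈ I' t?
        -- t = i here since rep t = t, rep i = i, c t = c i
        rw [mem_filter] at hx1
        have hti : t = i := by
          rw [← ht.2, hrepeq t i (hx1.2.symm.trans haj), hrepi]
        exact absurd (hti ▸ hxt) hjI
      rcases eq_or_ne x j' with rfl | hxj'
      · -- x = j' ∈ I' t → t = i, but a j' ≠ c i = c t? a j' = c t from hx1, and t = i
        have hti : t = i := by
          by_contra h
          exact hj'only t h hxt
        rw [mem_filter] at hx1
        exact absurd (hti ▸ hx1.2) haj'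
      · rw [hσx x hxj hxj']; exact hxt
    refine Finset.sum_lt_sum hile ⟨i, mem_filter.mpr ⟨mem_univ i, hrepi⟩, ?_⟩
    have hsub : (univ.filter fun x : Fin n => a x = c i) \ (I' i).map σ.toEmbedding
        ⊆ ((univ.filter fun x : Fin n => a x = c i) \ I' i).erase j := by
      intro x hx
      rw [mem_sdiff] at hx
      obtain ⟨hx1, hx2⟩ := hx
      rw [mem_erase, mem_sdiff]
      have hxj : x ≠ j := by
        rintro rfl
        exact hx2 ((hmem2 i x).mpr (hσj ▸ hj'I))
      refine ⟨hxj, hx1, fun hxt => hx2 ?_⟩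
      rw [hmem2]
      have hxj' : x ≠ j' := by
        rintro rfl
        rw [mem_filter] at hx1
        exact haj' hx1.2
      rw [hσx x hxj hxj']; exact hxt
    calc ((univ.filter fun x : Fin n => a x = c i) \ (I' i).map σ.toEmbedding).card
        ≤ (((univ.filter fun x : Fin n => a x = c i) \ I' i).erase j).card :=
          Finset.card_le_card hsub
      _ < ((univ.filter fun x : Fin n => a x = c i) \ I' i).card :=
          Finset.card_erase_lt_of_mem (mem_sdiff.mpr ⟨mem_filter.mpr ⟨mem_univ j, haj⟩, hjI⟩)

theorem exchange_aux
    {α : Type*} [DecidableEq α]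
    {m n k : ℕ}
    (a : Fin n → Fin m → α)
    (c : Fin k → Fin m → α)
    (rep : Fin k → Fin k)
    (hrepc : ∀ i, c (rep i) = c i)
    (hrepeq : ∀ i i', c i = c i' → rep i = rep i') :
    ∀ (N : ℕ) (I' : Fin k → Finset (Fin n)),
      (∀ i j : Fin k, i ≠ j → Disjoint (I' i) (I' j)) →
      (∀ x : Fin n, ∃ i, x ∈ I' i) →
      (∑ i ∈ univ.filter (fun i => rep i = i),
        ((univ.filter fun j : Fin n => a j = c i) \ I' i).card) ≤ N →
      ∃ I'' : Fin k → Finset (Fin n),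
        (∀ i j : Fin k, i ≠ j → Disjoint (I'' i) (I'' j)) ∧
        (∀ x : Fin n, ∃ i, x ∈ I'' i) ∧
        (∀ i, (I'' i).card = (I' i).card) ∧
        (∑ i, ∑ j ∈ I'' i, hammingDist (c i) (a j)
          ≤ ∑ i, ∑ j ∈ I' i, hammingDist (c i) (a j)) ∧
        (∀ i₀ : Fin k, (∃ j : Fin n, a j = c i₀) →
          ((univ.filter fun j : Fin n => a j = c i₀) ⊆ I'' (rep i₀)) ∨
          (I'' (rep i₀) ⊂ univ.filter fun j : Fin n => a j = c i₀)) := by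
  intro N
  induction N with
  | zero =>
    intro I' hdisj hcover hμ
    refine ⟨I', hdisj, hcover, fun _ => rfl, le_refl _, ?_⟩
    intro i₀ hex
    have hri : rep (rep i₀) = rep i₀ := hrepeq _ _ (hrepc i₀)
    have hJ : (univ.filter fun j : Fin n => a j = c i₀)
        = univ.filter fun j : Fin n => a j = c (rep i₀) := by
      simp [hrepc i₀]
    rw [hJ]
    have hμ0 : ((univ.filter fun j : Fin n => a j = c (rep i₀)) \ I' (rep i₀)).card = 0 := by
      have := Finset.sum_eq_zero_iff.mp (Nat.le_zero.mp hμ) (rep i₀)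
        (mem_filter.mpr ⟨mem_univ _, hri⟩)
      exact this
    left
    intro x hx
    by_contra hxI
    exact absurd (Finset.card_eq_zero.mp hμ0 ▸ mem_sdiff.mpr ⟨hx, hxI⟩) (Finset.notMem_empty x)
  | succ N ih =>
    intro I' hdisj hcover hμ
    by_cases hbad : ∃ i : Fin k, rep i = i ∧
        ((univ.filter fun j : Fin n => a j = c i) \ I' i).Nonempty ∧
        (I' i \ (univ.filter fun j : Fin n => a j = c i)).Nonempty
    · obtain ⟨i, hrepi, h1, h2⟩ := hbad
      obtain ⟨I₂, hd2, hc2, hcard2, hcost2, hμ2⟩ :=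
        exchange_swap a c rep hrepeq I' hdisj hcover i hrepi h1 h2
      obtain ⟨I'', hd, hc, hcard, hcost, hfin⟩ := ih I₂ hd2 hc2 (by omega)
      exact ⟨I'', hd, hc, fun t => (hcard t).trans (hcard2 t),
        hcost.trans hcost2, hfin⟩
    · push_neg at hbad
      refine ⟨I', hdisj, hcover, fun _ => rfl, le_refl _, ?_⟩
      intro i₀ hex
      have hri : rep (rep i₀) = rep i₀ := hrepeq _ _ (hrepc i₀)
      have hJ : (univ.filter fun j : Fin n => a j = c i₀)
          = univ.filter fun j : Fin n => a j = c (rep i₀) := by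
        simp [hrepc i₀]
      rw [hJ]
      rcases Finset.eq_empty_or_nonempty
          ((univ.filter fun j : Fin n => a j = c (rep i₀)) \ I' (rep i₀)) with he | hne
      · left
        intro x hx
        by_contra hxI
        exact absurd (he ▸ mem_sdiff.mpr ⟨hx, hxI⟩) (Finset.notMem_empty x)
      · have he2 : I' (rep i₀) \ (univ.filter fun j : Fin n => a j = c (rep i₀)) = ∅ :=
          hbad (rep i₀) hri hne
        have hsub : I' (rep i₀) ⊆ univ.filter fun j : Fin n => a j = c (rep i₀) := by
          intro x hx
          by_contra hxJ
          exact absurd (he2 ▸ mem_sdiff.mpr ⟨hx, hxJ⟩) (Finset.notMem_empty x)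
        right
        refine Finset.ssubset_iff_of_subset hsub |>.mpr ?_
        obtain ⟨x, hx⟩ := hne
        rw [mem_sdiff] at hx
        exact ⟨x, hx.1, hx.2⟩

/-- exchange lemma: given a `k`-clustering with optimal medians, there is a
`k`-clustering with the same cluster sizes and no larger cost with respect to the same
medians, such that for every median coinciding with a column of `A`, the corresponding
initial cluster is either contained in a single cluster or a cluster is strictly
contained in it. -/
theorem exchange_lemma
    {α : Type*} [Fintype α] [Nonempty α] [DecidableEq α]
    (m n k : ℕ) (hm : 0 < m) (hn : 0 < n) (hk : 0 < k)
    (a : Fin n → Fin m → α)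
    (I : Fin k → Finset (Fin n))
    (hdisj : ∀ i j : Fin k, i ≠ j → Disjoint (I i) (I j))
    (hcover : ∀ x : Fin n, ∃ i, x ∈ I i)
    (c : Fin k → Fin m → α)
    (hopt : ∀ i : Fin k, ∀ b : Fin m → α,
      ∑ j ∈ I i, hammingDist (c i) (a j) ≤ ∑ j ∈ I i, hammingDist b (a j)) :
    ∃ I' : Fin k → Finset (Fin n),
      (∀ i j : Fin k, i ≠ j → Disjoint (I' i) (I' j)) ∧
      (∀ x : Fin n, ∃ i, x ∈ I' i) ∧
      (∀ i, (I' i).card = (I i).card) ∧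
      (∑ i, ∑ j ∈ I' i, hammingDist (c i) (a j)
        ≤ ∑ i, ∑ j ∈ I i, hammingDist (c i) (a j)) ∧
      (∀ i₀ : Fin k, (∃ j : Fin n, a j = c i₀) →
        ∃ i : Fin k,
          ((Finset.univ.filter fun j : Fin n => a j = c i₀) ⊆ I' i) ∨
          (I' i ⊂ Finset.univ.filter fun j : Fin n => a j = c i₀)) := by
  have hkne : ∀ i : Fin k, (univ.filter fun i' : Fin k => c i' = c i).Nonempty :=
    fun i => ⟨i, mem_filter.mpr ⟨mem_univ i, rfl⟩⟩
  set rep : Fin k → Fin k := fun i => (univ.filter fun i' : Fin k => c i' = c i).min' (hkne i)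
    with hrep
  have hrepc : ∀ i, c (rep i) = c i := fun i =>
    (mem_filter.mp ((univ.filter fun i' : Fin k => c i' = c i).min'_mem (hkne i))).2
  have hrepeq : ∀ i i', c i = c i' → rep i = rep i' := by
    intro i i' h
    simp only [hrep, h]
  obtain ⟨I'', hd, hc, hcard, hcost, hfin⟩ :=
    exchange_aux a c rep hrepc hrepeq
      (∑ i ∈ univ.filter (fun i => rep i = i),
        ((univ.filter fun j : Fin n => a j = c i) \ I i).card)
      I hdisj hcover (le_refl _)
  exact ⟨I'', hd, hc, hcard, hcost, fun i₀ hex => ⟨rep i₀, hfin i₀ hex⟩⟩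
end

section
/- Let G be a finite simple graph that is a forest (contains no cycles), and suppose its vertex set is partitioned into two sets U and W such that every edge of G has one endpoint in U and one endpoint in W. If U is nonempty and every vertex of U has degree at least 2 in G, then the number of vertices of W that have at least one neighbor in U is at least |U| + 1. -/
open SimpleGraph

lemma myIsPath_concat {V : Type*} {G : SimpleGraph V} {r y x : V} {p : G.Walk r y}
    (hp : p.IsPath) (h : G.Adj y x) (hx : x ∉ p.support) : (p.concat h).IsPath := by
  rw [← SimpleGraph.Walk.isPath_reverse_iff, SimpleGraph.Walk.reverse_concat]
  rw [SimpleGraph.Walk.cons_isPath_iff]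
  exact ⟨hp.reverse, by simpa using hx⟩

lemma myDist_ne {V : Type*} [DecidableEq V] {G : SimpleGraph V} (hG : G.IsAcyclic) {r u v : V}
    (hru : G.Reachable r u) (h : G.Adj u v) : G.dist r u ≠ G.dist r v := by
  intro heq
  obtain ⟨p, hp, hpl⟩ := hru.exists_path_of_dist
  obtain ⟨q, hq, hql⟩ := (hru.trans h.reachable).exists_path_of_dist
  by_cases hv : v ∈ p.support
  · have h1 : G.dist r v ≤ (p.takeUntil v hv).length := SimpleGraph.dist_le _
    have h2 := SimpleGraph.Walk.take_spec p hv
    have h3 : (p.dropUntil v hv).length ≠ 0 := by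
      intro h0
      exact h.ne' (SimpleGraph.Walk.eq_of_length_eq_zero h0)
    have h4 : (p.takeUntil v hv).length + (p.dropUntil v hv).length = p.length := by
      conv_rhs => rw [← h2]
      rw [SimpleGraph.Walk.length_append]
    omega
  · have hpath := myIsPath_concat hp h hv
    have := hG.path_unique ⟨p.concat h, hpath⟩ ⟨q, hq⟩
    have hl : (p.concat h).length = q.length := by
      rw [Subtype.ext_iff] at this
      exact congrArg SimpleGraph.Walk.length this
    rw [SimpleGraph.Walk.length_concat] at hl
    omega

lemma myParent_unique {V : Type*} [DecidableEq V] {G : SimpleGraph V} (hG : G.IsAcyclic)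
    {r x y z : V} (hry : G.Reachable r y) (hrz : G.Reachable r z)
    (hxy : G.Adj x y) (hxz : G.Adj x z)
    (hy : G.dist r x = G.dist r y + 1) (hz : G.dist r x = G.dist r z + 1) : y = z := by
  obtain ⟨p, hp, hpl⟩ := hry.exists_path_of_dist
  obtain ⟨q, hq, hql⟩ := hrz.exists_path_of_dist
  have hxp : x ∉ p.support := by
    intro hxp
    have h1 : G.dist r x ≤ (p.takeUntil x hxp).length := SimpleGraph.dist_le _
    have h2 : (p.takeUntil x hxp).length ≤ p.length := SimpleGraph.Walk.length_takeUntil_le p hxp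
    omega
  have hxq : x ∉ q.support := by
    intro hxq
    have h1 : G.dist r x ≤ (q.takeUntil x hxq).length := SimpleGraph.dist_le _
    have h2 : (q.takeUntil x hxq).length ≤ q.length := SimpleGraph.Walk.length_takeUntil_le q hxq
    omega
  have hp1 := myIsPath_concat hp hxy.symm hxp
  have hq1 := myIsPath_concat hq hxz.symm hxq
  have heq := hG.path_unique ⟨p.concat hxy.symm, hp1⟩ ⟨q.concat hxz.symm, hq1⟩
  rw [Subtype.ext_iff] at heq
  obtain ⟨hv, -⟩ := SimpleGraph.Walk.concat_inj heq
  exact hv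

lemma myDist_adj_le {V : Type*} {G : SimpleGraph V} {r u v : V}
    (hru : G.Reachable r u) (h : G.Adj u v) : G.dist r v ≤ G.dist r u + 1 := by
  obtain ⟨p, hpl⟩ := hru.exists_walk_length_eq_dist
  have := SimpleGraph.dist_le (p.concat h)
  rwa [SimpleGraph.Walk.length_concat, hpl] at this

lemma myReachable_eq_or_adj {V : Type*} {G : SimpleGraph V} {u v : V} (h : G.Reachable u v) :
    u = v ∨ ∃ y, G.Adj u y := by
  obtain ⟨w⟩ := h
  cases w with
  | nil => exact Or.inl rfl
  | cons h q => exact Or.inr ⟨_, h⟩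

/-- Edge bound for a forest whose edges all lie within a nonempty finset `s`. -/
lemma myForest_edge_bound {V : Type*} [Fintype V] [DecidableEq V] (G : SimpleGraph V)
    [Fintype G.edgeSet] (hG : G.IsAcyclic) (s : Finset V) (hs : s.Nonempty)
    (hE : ∀ a b : V, G.Adj a b → a ∈ s ∧ b ∈ s) :
    G.edgeFinset.card + 1 ≤ s.card := by
  classical
  set root : V → V := fun v => (G.connectedComponentMk v).out with hrootdef
  have hroot_reach : ∀ v, G.Reachable (root v) v := by
    intro v
    exact SimpleGraph.ConnectedComponent.exact (Quot.out_eq _)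
  have hroot_adj : ∀ a b : V, G.Adj a b → root a = root b := by
    intro a b hab
    simp only [hrootdef]
    rw [SimpleGraph.ConnectedComponent.sound hab.reachable]
  have hroot_fix : ∀ v, root (root v) = root v := by
    intro v
    simp only [hrootdef]
    congr 1
    exact Quot.out_eq _
  set Q : Sym2 V → V → Prop := fun e x =>
    ∃ y, G.Adj x y ∧ e = s(x, y) ∧ G.dist (root x) x = G.dist (root x) y + 1 with hQdef
  have hQ : ∀ e ∈ G.edgeFinset, ∃ x, Q e x := by
    intro e he
    rw [SimpleGraph.mem_edgeFinset] at he
    induction e with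
    | _ a b =>
      have hadj : G.Adj a b := he
      have hr : root a = root b := hroot_adj a b hadj
      have hra : G.Reachable (root a) a := hroot_reach a
      have hrb : G.Reachable (root a) b := hr ▸ hroot_reach b
      have hne := myDist_ne hG hra hadj
      have h1 := myDist_adj_le hra hadj
      have h2 := myDist_adj_le hrb hadj.symm
      rcases Nat.lt_or_ge (G.dist (root a) a) (G.dist (root a) b) with hlt | hge
      · exact ⟨b, a, hadj.symm, Sym2.eq_swap, by rw [← hr]; omega⟩
      · exact ⟨a, b, hadj, rfl, by omega⟩
  set φ : Sym2 V → V := fun e => if h : ∃ x, Q e x then h.choose else hs.choose with hφdef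
  have hφ : ∀ e ∈ G.edgeFinset, Q e (φ e) := by
    intro e he
    have h' : ∃ x, Q e x := hQ e he
    simp only [hφdef, dif_pos h']
    exact h'.choose_spec
  set T : Finset V := s.filter (fun x => root x ≠ x) with hTdef
  have hmem : ∀ e ∈ G.edgeFinset, φ e ∈ T := by
    intro e he
    obtain ⟨y, hxy, -, hd⟩ := hφ e he
    rw [hTdef, Finset.mem_filter]
    refine ⟨(hE _ _ hxy).1, fun hfix => ?_⟩
    rw [hfix, SimpleGraph.dist_self] at hd
    omega
  have hinj : Set.InjOn φ G.edgeFinset := by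
    intro e1 he1 e2 he2 hee
    obtain ⟨y, hxy, hey, hdy⟩ := hφ e1 (by simpa using he1)
    obtain ⟨z, hxz, hez, hdz⟩ := hφ e2 (by simpa using he2)
    rw [hee] at hxy hey hdy
    set x := φ e2
    have hry : G.Reachable (root x) y := (hroot_reach x).trans hxy.reachable
    have hrz : G.Reachable (root x) z := (hroot_reach x).trans hxz.reachable
    have : y = z := myParent_unique hG hry hrz hxy hxz hdy hdz
    rw [hey, hez, this]
  have hcard : G.edgeFinset.card ≤ T.card :=
    Finset.card_le_card_of_injOn φ hmem hinj
  -- find a fixed point of root inside s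
  obtain ⟨v0, hv0⟩ := hs
  set x0 := root v0 with hx0
  have hx0fix : root x0 = x0 := hroot_fix v0
  have hx0s : x0 ∈ s := by
    rcases myReachable_eq_or_adj (hroot_reach v0) with h | ⟨y, hy⟩
    · rw [hx0, h]; exact hv0
    · exact (hE _ _ hy).1
  have hx0T : x0 ∉ T := by
    rw [hTdef, Finset.mem_filter]
    push_neg
    intro _
    exact hx0fix
  have hsub : T ⊆ s.erase x0 := by
    intro x hx
    rw [Finset.mem_erase]
    rw [hTdef, Finset.mem_filter] at hx
    refine ⟨?_, hx.1⟩
    rintro rfl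
    exact hx.2 hx0fix
  have := Finset.card_le_card hsub
  rw [Finset.card_erase_of_mem hx0s] at this
  have hs1 : 1 ≤ s.card := Finset.card_pos.mpr ⟨x0, hx0s⟩
  omega


/-- In a bipartite forest with sides `U` and `W`, if `U` is nonempty and
every vertex of `U` has degree at least 2, then at least `|U| + 1` vertices of `W` have a
neighbor in `U`. -/
theorem forest_bipartite_neighbors_bound
    {V : Type*} [Fintype V] (G : SimpleGraph V) (hG : G.IsAcyclic)
    (U W : Finset V)
    (hUW : Disjoint U W)
    (hcover : ∀ v : V, v ∈ U ∨ v ∈ W)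
    (hbip : ∀ u v : V, G.Adj u v → (u ∈ U ∧ v ∈ W) ∨ (u ∈ W ∧ v ∈ U))
    (hUne : U.Nonempty)
    (hdeg : ∀ u ∈ U, 2 ≤ (G.neighborSet u).ncard) :
    U.card + 1 ≤ {w : V | w ∈ W ∧ ∃ u ∈ U, G.Adj w u}.ncard := by
  classical
  set H : SimpleGraph V := SimpleGraph.fromRel (fun a b => G.Adj a b ∧ (a ∈ U ∨ b ∈ U))
    with hHdef
  have hadj_iff : ∀ a b : V, H.Adj a b ↔ G.Adj a b ∧ (a ∈ U ∨ b ∈ U) := by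
    intro a b
    rw [hHdef, SimpleGraph.fromRel_adj]
    constructor
    · rintro ⟨hne, ⟨h1, h2⟩ | ⟨h1, h2⟩⟩
      · exact ⟨h1, h2⟩
      · exact ⟨h1.symm, h2.symm⟩
    · rintro ⟨h1, h2⟩
      exact ⟨h1.ne, Or.inl ⟨h1, h2⟩⟩
  have hle : H ≤ G := fun a b h => ((hadj_iff a b).mp h).1
  have hH : H.IsAcyclic := fun v c hc => hG (c.mapLe hle) (hc.mapLe hle)
  set N' : Finset V := W.filter (fun w => ∃ u ∈ U, G.Adj w u) with hN'def
  set s : Finset V := U ∪ N' with hsdef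
  have hN'W : N' ⊆ W := Finset.filter_subset _ _
  have hdisj : Disjoint U N' := hUW.mono_right hN'W
  have hscard : s.card = U.card + N'.card := Finset.card_union_of_disjoint hdisj
  have hE : ∀ a b : V, H.Adj a b → a ∈ s ∧ b ∈ s := by
    intro a b hab
    obtain ⟨hG', -⟩ := (hadj_iff a b).mp hab
    rcases hbip a b hG' with ⟨ha, hb⟩ | ⟨ha, hb⟩
    · refine ⟨Finset.mem_union_left _ ha, Finset.mem_union_right _ ?_⟩
      rw [hN'def, Finset.mem_filter]
      exact ⟨hb, a, ha, hG'.symm⟩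
    · refine ⟨Finset.mem_union_right _ ?_, Finset.mem_union_left _ hb⟩
      rw [hN'def, Finset.mem_filter]
      exact ⟨ha, b, hb, hG'⟩
  -- degrees in H on U equal degrees in G
  have hdegH : ∀ u ∈ U, 2 ≤ H.degree u := by
    intro u hu
    have hnb : H.neighborFinset u = G.neighborFinset u := by
      ext b
      simp only [SimpleGraph.mem_neighborFinset]
      rw [hadj_iff]
      exact ⟨fun h => h.1, fun h => ⟨h, Or.inl hu⟩⟩
    have hnc : (G.neighborSet u).ncard = G.degree u := by
      rw [Set.ncard_eq_toFinset_card']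
      congr 1
    rw [SimpleGraph.degree, hnb]
    rw [← SimpleGraph.degree, ← hnc]
    exact hdeg u hu
  -- incidence sets of distinct vertices of U are disjoint
  have hdisjInc : ∀ u ∈ U, ∀ u' ∈ U, u ≠ u' →
      Disjoint (H.incidenceFinset u) (H.incidenceFinset u') := by
    intro u hu u' hu' hne
    rw [Finset.disjoint_left]
    intro e he he'
    rw [SimpleGraph.mem_incidenceFinset] at he he'
    have hmem : e ∈ ({s(u, u')} : Set (Sym2 V)) :=
      H.incidenceSet_inter_incidenceSet_subset hne ⟨he, he'⟩
    rw [Set.mem_singleton_iff] at hmem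
    have hadj : H.Adj u u' := by
      have := he.1
      rw [hmem] at this
      rw [← SimpleGraph.mem_edgeSet]
      exact this
    obtain ⟨hGadj, -⟩ := (hadj_iff u u').mp hadj
    rcases hbip u u' hGadj with ⟨h1, h2⟩ | ⟨h1, h2⟩
    · exact (Finset.disjoint_left.mp hUW hu') h2
    · exact (Finset.disjoint_left.mp hUW hu) h1
  -- edge count lower bound
  have hbiUnion : U.biUnion (fun u => H.incidenceFinset u) ⊆ H.edgeFinset := by
    intro e he
    rw [Finset.mem_biUnion] at he
    obtain ⟨u, -, he⟩ := he
    rw [SimpleGraph.mem_incidenceFinset] at he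
    rw [SimpleGraph.mem_edgeFinset]
    exact he.1
  have hlow : 2 * U.card ≤ H.edgeFinset.card := by
    calc 2 * U.card = ∑ _u ∈ U, 2 := by rw [Finset.sum_const, smul_eq_mul, mul_comm]
    _ ≤ ∑ u ∈ U, (H.incidenceFinset u).card := by
        apply Finset.sum_le_sum
        intro u hu
        rw [SimpleGraph.card_incidenceFinset_eq_degree]
        exact hdegH u hu
    _ = (U.biUnion (fun u => H.incidenceFinset u)).card :=
        (Finset.card_biUnion hdisjInc).symm
    _ ≤ H.edgeFinset.card := Finset.card_le_card hbiUnion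
  -- upper bound from forest structure
  have hup : H.edgeFinset.card + 1 ≤ s.card := by
    apply myForest_edge_bound H hH s
    · exact hUne.mono Finset.subset_union_left
    · exact hE
  -- conclude
  have hfinal : U.card + 1 ≤ N'.card := by omega
  have hsetN : {w : V | w ∈ W ∧ ∃ u ∈ U, G.Adj w u} = ↑N' := by
    rw [hN'def, Finset.coe_filter]
  rw [hsetN, Set.ncard_coe_finset]
  exact hfinal
end

section
/- Let c_1,…,c_k ∈ Σ^m be given vectors, let p ≤ q be positive integers, and assume pk ≤ n ≤ qk. Define the bipartite graph G as follows. One side consists of vertices u_1,…,u_n (one per column of A) together with 'filler' vertices u'_1,…,u'_{qk−n}; the other side consists, for each i ∈ {1,…,k}, of q vertices v^i_1,…,v^i_q, where W_i = {v^i_1,…,v^i_p} and W'_i = {v^i_{p+1},…,v^i_q}. Each u_h (1 ≤ h ≤ n) is adjacent to every vertex v^i_j (1 ≤ i ≤ k, 1 ≤ j ≤ q), the edge u_h v^i_j having weight d_H(c_i, a_h); each filler u'_h is adjacent exactly to all vertices of W'_1 ∪ … ∪ W'_k, these edges having weight 0; there are no other edges. Then G has a perfect matching whose total edge weight is at most B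 if and only if there exists a k-clustering {I_1,…,I_k} of A with p ≤ |I_i| ≤ q for all i ∈ {1,…,k} and Σ_{i=1}^k Σ_{j∈I_i} d_H(c_i, a_j) ≤ B. -/
namespace CapacitatedClusteringMatching

/-- Vertices of the auxiliary bipartite graph: on the left, the `n` column vertices
`u_1, ..., u_n` together with `fn = qk - n` filler vertices `u'_1, ..., u'_fn`; on the
right, for each `i ∈ {1,…,k}` the `q` vertices `v^i_1, ..., v^i_q` (those with index
`< p` form `W_i`, the remaining ones form `W'_i`). -/
abbrev Vt (n fn k q : ℕ) := (Fin n ⊕ Fin fn) ⊕ (Fin k × Fin q)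

/-- Base (one-sided) adjacency relation: every column vertex `u_h` is related to every
right vertex `v^i_j`; every filler is related exactly to the vertices of
`W'_1 ∪ ⋯ ∪ W'_k`, i.e. those `v^i_j` with `p ≤ j`. -/
def rel (n fn k q p : ℕ) : Vt n fn k q → Vt n fn k q → Prop
  | Sum.inl (Sum.inl _), Sum.inr _ => True
  | Sum.inl (Sum.inr _), Sum.inr (_, j) => p ≤ (j : ℕ)
  | _, _ => False

/-- The auxiliary bipartite graph `G`. -/
def G (n fn k q p : ℕ) : SimpleGraph (Vt n fn k q) :=
  SimpleGraph.fromRel (rel n fn k q p)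

/-- Edge weights: the edge `u_h v^i_j` has weight `d_H(c_i, a_h)`; all edges incident to
fillers have weight `0`. -/
def pw {α : Type*} [DecidableEq α] {m n k : ℕ} (fn q : ℕ)
    (a : Fin n → Fin m → α) (c : Fin k → Fin m → α) :
    Vt n fn k q → Vt n fn k q → ℕ
  | Sum.inl (Sum.inl h), Sum.inr (i, _) => hammingDist (c i) (a h)
  | Sum.inr (i, _), Sum.inl (Sum.inl h) => hammingDist (c i) (a h)
  | _, _ => 0

lemma pw_symm {α : Type*} [DecidableEq α] {m n k : ℕ} (fn q : ℕ)
    (a : Fin n → Fin m → α) (c : Fin k → Fin m → α) :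
    ∀ x y : Vt n fn k q, pw fn q a c x y = pw fn q a c y x := by
  rintro (⟨h, h⟩ | ⟨i, j⟩) (⟨h', h'⟩ | ⟨i', j'⟩) <;> rfl

/-- The weight of an edge of the auxiliary graph. -/
def edgeWeight {α : Type*} [DecidableEq α] {m n k : ℕ} (fn q : ℕ)
    (a : Fin n → Fin m → α) (c : Fin k → Fin m → α) :
    Sym2 (Vt n fn k q) → ℕ :=
  Sym2.lift ⟨pw fn q a c, pw_symm fn q a c⟩

section Aux
variable {n fn k q p : ℕ}

lemma not_adj_ll (x y : Fin n ⊕ Fin fn) : ¬ (G n fn k q p).Adj (Sum.inl x) (Sum.inl y) := by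
  rintro ⟨hne, h | h⟩ <;> rcases x with x|x <;> rcases y with y|y <;> exact h

lemma not_adj_rr (x y : Fin k × Fin q) : ¬ (G n fn k q p).Adj (Sum.inr x) (Sum.inr y) := by
  rintro ⟨hne, h | h⟩ <;> exact h

lemma sigma_left_right {σ : Vt n fn k q → Vt n fn k q}
    (hσ : ∀ v, (G n fn k q p).Adj v (σ v)) (x : Fin n ⊕ Fin fn) :
    ∃ r, σ (Sum.inl x) = Sum.inr r := by
  rcases hr : σ (Sum.inl x) with y | r
  · exact absurd (hr ▸ hσ (Sum.inl x)) (not_adj_ll _ _)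
  · exact ⟨r, rfl⟩

lemma sigma_right_left {σ : Vt n fn k q → Vt n fn k q}
    (hσ : ∀ v, (G n fn k q p).Adj v (σ v)) (r : Fin k × Fin q) :
    ∃ x, σ (Sum.inr r) = Sum.inl x := by
  rcases hr : σ (Sum.inr r) with y | r'
  · exact ⟨y, rfl⟩
  · exact absurd (hr ▸ hσ (Sum.inr r)) (not_adj_rr _ _)

lemma edgeSet_eq (M : (G n fn k q p).Subgraph) (hM : M.IsPerfectMatching)
    {σ : Vt n fn k q → Vt n fn k q} (hσ : ∀ v, M.Adj v (σ v)) :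
    M.edgeSet = Set.range (fun x : Fin n ⊕ Fin fn => s(Sum.inl x, σ (Sum.inl x))) := by
  have huniq : ∀ v w, M.Adj v w → w = σ v := fun v w h =>
    (hM.1 (hM.2 v)).unique h (hσ v)
  ext e
  induction e using Sym2.ind with
  | _ a b =>
    simp only [SimpleGraph.Subgraph.mem_edgeSet, Set.mem_range]
    constructor
    · intro hab
      rcases a with x | r
      · exact ⟨x, by rw [huniq _ _ hab]⟩
      · rcases b with x | r'
        · exact ⟨x, by rw [huniq _ _ hab.symm, Sym2.eq_swap]⟩
        · exact absurd (M.adj_sub hab) (not_adj_rr _ _)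
    · rintro ⟨x, hx⟩
      rw [Sym2.eq_iff] at hx
      rcases hx with ⟨ha, hb⟩ | ⟨ha, hb⟩
      · rw [← ha, ← hb]; exact hσ _
      · rw [← ha, ← hb]; exact (hσ _).symm

lemma sum_edgeWeight (M : (G n fn k q p).Subgraph) (hM : M.IsPerfectMatching)
    {σ : Vt n fn k q → Vt n fn k q} (hσ : ∀ v, M.Adj v (σ v))
    (w : Sym2 (Vt n fn k q) → ℕ) :
    ∑ᶠ e ∈ M.edgeSet, w e = ∑ x : Fin n ⊕ Fin fn, w s(Sum.inl x, σ (Sum.inl x)) := by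
  have hσG : ∀ v, (G n fn k q p).Adj v (σ v) := fun v => M.adj_sub (hσ v)
  have hinj : Function.Injective
      (fun x : Fin n ⊕ Fin fn => s(Sum.inl x, σ (Sum.inl x)) : _ → Sym2 (Vt n fn k q)) := by
    intro x y hxy
    simp only [Sym2.eq_iff] at hxy
    rcases hxy with ⟨h1, -⟩ | ⟨h1, h2⟩
    · exact Sum.inl.inj h1
    · obtain ⟨r, hr⟩ := sigma_left_right hσG y
      rw [hr] at h1; exact absurd h1 (by simp)
  rw [edgeSet_eq M hM hσ, finsum_mem_range hinj, finsum_eq_sum_of_fintype]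

lemma filler_adj_le (y : Fin fn) (i : Fin k) (j : Fin q)
    (h : (G n fn k q p).Adj (Sum.inl (Sum.inr y)) (Sum.inr (i, j))) : p ≤ (j : ℕ) := by
  rcases h with ⟨-, h | h⟩
  · exact h
  · exact h.elim
lemma adj_col (h : Fin n) (r : Fin k × Fin q) :
    (G n fn k q p).Adj (Sum.inl (Sum.inl h)) (Sum.inr r) :=
  ⟨by simp, Or.inl trivial⟩
lemma adj_filler (y : Fin fn) (i : Fin k) (j : Fin q) (hj : p ≤ (j : ℕ)) :
    (G n fn k q p).Adj (Sum.inl (Sum.inr y)) (Sum.inr (i, j)) :=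
  ⟨by simp, Or.inl hj⟩


lemma fiber_sum {α : Type*} [DecidableEq α] (m : ℕ) (a : Fin n → Fin m → α)
    (c : Fin k → Fin m → α) (f : Fin n → Fin k) :
    ∑ i, ∑ h ∈ Finset.univ.filter (fun h => f h = i), hammingDist (c i) (a h)
      = ∑ h, hammingDist (c (f h)) (a h) := by
  rw [← Finset.sum_fiberwise Finset.univ f (fun h => hammingDist (c (f h)) (a h))]
  refine Finset.sum_congr rfl fun i _ => Finset.sum_congr rfl fun h hh => ?_
  rw [(Finset.mem_filter.mp hh).2]

lemma card_filter_lt {m q : ℕ} (hm : m ≤ q) :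
    (Finset.univ.filter fun j : Fin q => (j : ℕ) < m).card = m := by
  have : (Finset.univ.filter fun j : Fin q => (j : ℕ) < m)
      = (Finset.univ : Finset (Fin m)).map (Fin.castLEEmb hm) := by
    ext j
    simp only [Finset.mem_filter, Finset.mem_univ, true_and, Finset.mem_map]
    constructor
    · intro hj
      refine ⟨⟨(j : ℕ), hj⟩, ?_⟩
      simp [Fin.castLEEmb, Fin.ext_iff]
    · rintro ⟨x, rfl⟩
      simpa [Fin.castLEEmb] using x.2
  rw [this, Finset.card_map, Finset.card_univ, Fintype.card_fin]

lemma card_filter_ge {m q : ℕ} (hm : m ≤ q) :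
    (Finset.univ.filter fun j : Fin q => m ≤ (j : ℕ)).card = q - m := by
  have h1 := Finset.card_filter_add_card_filter_not
    (s := (Finset.univ : Finset (Fin q))) (p := fun j : Fin q => (j : ℕ) < m)
  have h2 : (Finset.univ.filter fun j : Fin q => ¬ (j : ℕ) < m)
      = Finset.univ.filter fun j : Fin q => m ≤ (j : ℕ) := by
    apply Finset.filter_congr; intro j _; simp
  rw [card_filter_lt hm, h2, Finset.card_univ, Fintype.card_fin] at h1
  omega

/-- The matching map from right vertices to left vertices, given the clustering. -/
noncomputable def phi (I : Fin k → Finset (Fin n))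
    (eS : {r : Fin k × Fin q // (I r.1).card ≤ (r.2 : ℕ)} → Fin fn) :
    Fin k × Fin q → Fin n ⊕ Fin fn :=
  fun r => if h : (r.2 : ℕ) < (I r.1).card
    then Sum.inl (((I r.1).orderIsoOfFin rfl ⟨r.2, h⟩ : (I r.1)) : Fin n)
    else Sum.inr (eS ⟨r, not_lt.mp h⟩)

lemma phi_inj (I : Fin k → Finset (Fin n))
    (hdisj : ∀ i j : Fin k, i ≠ j → Disjoint (I i) (I j))
    {eS : {r : Fin k × Fin q // (I r.1).card ≤ (r.2 : ℕ)} → Fin fn}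
    (heS : Function.Injective eS) :
    Function.Injective (phi I eS) := by
  rintro ⟨i, j⟩ ⟨i', j'⟩ heq
  dsimp [phi] at heq
  split_ifs at heq with h h' h'
  · have hx := Sum.inl.inj heq
    have hii' : i = i' := by
      by_contra hne
      have hm2 : (I i').orderEmbOfFin rfl ⟨(j' : ℕ), h'⟩ ∈ I i' :=
        Finset.orderEmbOfFin_mem _ _ _
      rw [← hx] at hm2
      exact (Finset.disjoint_left.mp (hdisj _ _ hne))
        (Finset.orderEmbOfFin_mem _ _ _) hm2
    subst hii'
    have h4 := ((I i).orderEmbOfFin rfl).injective hx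
    exact Prod.ext rfl (by simpa [Fin.ext_iff] using congrArg Fin.val h4)
  all_goals first
    | exact Subtype.mk_eq_mk.mp (heS (Sum.inr.inj heq))
    | simp at heq

lemma phi_adj (I : Fin k → Finset (Fin n)) (hpi : ∀ i, p ≤ (I i).card)
    (eS : {r : Fin k × Fin q // (I r.1).card ≤ (r.2 : ℕ)} → Fin fn) (r : Fin k × Fin q) :
    (G n fn k q p).Adj (Sum.inr r) (Sum.inl (phi I eS r)) := by
  rcases r with ⟨i, j⟩
  dsimp [phi]
  split_ifs with h
  · exact (adj_col _ _).symm
  · exact (adj_filler _ i j (le_trans (hpi i) (not_lt.mp h))).symm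


lemma forward_dir {α : Type*} [Fintype α] [Nonempty α] [DecidableEq α]
    {m n k B p q : ℕ} (hpq : p ≤ q)
    (a : Fin n → Fin m → α) (c : Fin k → Fin m → α)
    (M : (G n (q * k - n) k q p).Subgraph) (hM : M.IsPerfectMatching)
    (hw : (∑ᶠ e ∈ M.edgeSet, edgeWeight (q * k - n) q a c e) ≤ B) :
    (∃ I : Fin k → Finset (Fin n),
      (∀ i j : Fin k, i ≠ j → Disjoint (I i) (I j)) ∧
      (∀ x : Fin n, ∃ i, x ∈ I i) ∧
      (∀ i : Fin k, p ≤ (I i).card ∧ (I i).card ≤ q) ∧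
      (∑ i, ∑ j ∈ I i, hammingDist (c i) (a j)) ≤ B) := by
  classical
  have hσ0 : ∀ v : Vt n (q * k - n) k q, ∃ w, M.Adj v w := fun v => (hM.1 (hM.2 v)).exists
  choose σ hσ using hσ0
  have huniq : ∀ v w, M.Adj v w → w = σ v := fun v w h => (hM.1 (hM.2 v)).unique h (hσ v)
  have hσG : ∀ v, (G n (q * k - n) k q p).Adj v (σ v) := fun v => M.adj_sub (hσ v)
  have hinv : ∀ v, σ (σ v) = v := fun v => (huniq (σ v) v (M.adj_symm (hσ v))).symm
  have hσinj : Function.Injective σ := fun u v h => by rw [← hinv u, h, hinv]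
  choose r hr using fun h : Fin n => sigma_left_right hσG (Sum.inl h)
  refine ⟨fun i => Finset.univ.filter (fun h => (r h).1 = i), ?_, ?_, ?_, ?_⟩
  · intro i j hij
    rw [Finset.disjoint_left]
    intro x hxi hxj
    exact hij ((Finset.mem_filter.mp hxi).2 ▸ (Finset.mem_filter.mp hxj).2 ▸ rfl)
  · exact fun x => ⟨(r x).1, Finset.mem_filter.mpr ⟨Finset.mem_univ _, rfl⟩⟩
  · intro i
    constructor
    · -- lower bound
      have ht : ∀ j : Fin p, ∃ h : Fin n,
          σ (Sum.inr (i, ⟨(j : ℕ), lt_of_lt_of_le j.2 hpq⟩)) = Sum.inl (Sum.inl h) := by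
        intro j
        obtain ⟨x, hx⟩ := sigma_right_left hσG (i, ⟨(j : ℕ), lt_of_lt_of_le j.2 hpq⟩)
        rcases x with h | y
        · exact ⟨h, hx⟩
        · have := filler_adj_le y i _ (hx ▸ (hσG (Sum.inr (i, ⟨(j : ℕ), lt_of_lt_of_le j.2 hpq⟩))).symm)
          exact absurd this (by simpa using j.2)
      choose t ht using ht
      have hrt : ∀ j : Fin p, r (t j) = (i, ⟨(j : ℕ), lt_of_lt_of_le j.2 hpq⟩) := by
        intro j
        have : σ (Sum.inl (Sum.inl (t j))) = Sum.inr (i, ⟨(j : ℕ), lt_of_lt_of_le j.2 hpq⟩) := by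
          rw [← ht j, hinv]
        rw [hr (t j)] at this
        exact Sum.inr.inj this
      calc p = (Finset.univ : Finset (Fin p)).card := by simp
        _ ≤ _ := Finset.card_le_card_of_injOn t
            (fun j _ => Finset.mem_filter.mpr ⟨Finset.mem_univ _, by rw [hrt j]⟩)
            (fun j₁ _ j₂ _ hj => by
              have := (hrt j₁) ▸ (hrt j₂) ▸ congrArg r hj
              simpa [Fin.ext_iff, Prod.ext_iff] using this)
    · -- upper bound
      calc (Finset.univ.filter (fun h => (r h).1 = i)).card
          ≤ (Finset.univ : Finset (Fin q)).card := by
            refine Finset.card_le_card_of_injOn (fun h => (r h).2)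
              (fun _ _ => Finset.mem_univ _) ?_
            intro h₁ hh₁ h₂ hh₂ hsnd
            have h1 : (r h₁) = (r h₂) := Prod.ext
              ((Finset.mem_filter.mp hh₁).2.trans (Finset.mem_filter.mp hh₂).2.symm) hsnd
            have : σ (Sum.inl (Sum.inl h₁)) = σ (Sum.inl (Sum.inl h₂)) := by
              rw [hr h₁, hr h₂, h1]
            simpa using hσinj this
        _ = q := by simp
  · -- cost
    rw [fiber_sum m a c (fun h => (r h).1)]
    refine le_trans (le_of_eq ?_) hw
    rw [sum_edgeWeight M hM hσ, Fintype.sum_sum_type]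
    have h1 : ∀ h : Fin n,
        edgeWeight (q * k - n) q a c s(Sum.inl (Sum.inl h), σ (Sum.inl (Sum.inl h)))
          = hammingDist (c (r h).1) (a h) := by
      intro h
      rw [hr h]
      rcases hrr : r h with ⟨i, j⟩
      simp [edgeWeight, pw]
    have h2 : ∀ y : Fin (q * k - n),
        edgeWeight (q * k - n) q a c s(Sum.inl (Sum.inr y), σ (Sum.inl (Sum.inr y))) = 0 := by
      intro y
      obtain ⟨⟨i, j⟩, hrr⟩ := sigma_left_right hσG (Sum.inr y)
      rw [hrr]
      simp [edgeWeight, pw]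
    simp only [h1, h2, Finset.sum_const_zero, add_zero]

lemma backward_dir {α : Type*} [Fintype α] [Nonempty α] [DecidableEq α]
    {m n k B p q : ℕ} (hhigh : n ≤ q * k)
    (a : Fin n → Fin m → α) (c : Fin k → Fin m → α)
    (I : Fin k → Finset (Fin n))
    (hdisj : ∀ i j : Fin k, i ≠ j → Disjoint (I i) (I j))
    (hcov : ∀ x : Fin n, ∃ i, x ∈ I i)
    (hcards : ∀ i : Fin k, p ≤ (I i).card ∧ (I i).card ≤ q)
    (hB : (∑ i, ∑ j ∈ I i, hammingDist (c i) (a j)) ≤ B) :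
    (∃ M : (G n (q * k - n) k q p).Subgraph, M.IsPerfectMatching ∧
        (∑ᶠ e ∈ M.edgeSet, edgeWeight (q * k - n) q a c e) ≤ B) := by
  classical
  choose f hf using hcov
  have hmemiff : ∀ (x : Fin n) (i : Fin k), x ∈ I i ↔ f x = i := by
    intro x i
    constructor
    · intro hx
      by_contra hne
      exact (Finset.disjoint_left.mp (hdisj _ _ fun h => hne h.symm)) hx (hf x)
    · rintro rfl; exact hf x
  have hIfilter : ∀ i, I i = Finset.univ.filter (fun h => f h = i) := by
    intro i; ext x; simp [hmemiff x i]
  have hsumcard : ∑ i, (I i).card = n := by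
    have := Finset.card_eq_sum_card_fiberwise
      (f := f) (s := (Finset.univ : Finset (Fin n))) (t := Finset.univ)
      (fun x _ => Finset.mem_univ _)
    rw [Finset.card_univ, Fintype.card_fin] at this
    rw [show ∑ i, (I i).card = ∑ i, (Finset.univ.filter (fun h => f h = i)).card from
      Finset.sum_congr rfl fun i _ => by rw [hIfilter i]]
    exact this.symm
  have hcardS : Fintype.card {r : Fin k × Fin q // (I r.1).card ≤ (r.2 : ℕ)} = q * k - n := by
    rw [Fintype.card_subtype]
    have : (Finset.univ.filter fun r : Fin k × Fin q => (I r.1).card ≤ (r.2 : ℕ)).card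
        = ∑ i : Fin k, (q - (I i).card) := by
      rw [Finset.card_filter, Fintype.sum_prod_type]
      refine Finset.sum_congr rfl fun i _ => ?_
      rw [← Finset.card_filter]
      exact card_filter_ge (hcards i).2
    rw [this, Finset.sum_tsub_distrib Finset.univ (fun i _ => (hcards i).2), hsumcard]
    simp [Finset.sum_const, Finset.card_univ, Nat.mul_comm]
  have eS := Fintype.equivFinOfCardEq hcardS
  have hb : Function.Bijective (phi I (fn := q * k - n) eS) := by
    rw [Fintype.bijective_iff_injective_and_card]
    refine ⟨phi_inj I hdisj eS.injective, ?_⟩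
    simp only [Fintype.card_prod, Fintype.card_sum, Fintype.card_fin]
    rw [Nat.add_sub_cancel' hhigh, Nat.mul_comm]
  set Φ := Equiv.ofBijective _ hb with hΦdef
  have hΦapp : ∀ r, Φ r = phi I eS r := fun r => rfl
  set σ : Vt n (q * k - n) k q → Vt n (q * k - n) k q :=
    Sum.elim (fun x => Sum.inr (Φ.symm x)) (fun r => Sum.inl (Φ r)) with hσdef
  have hσG : ∀ v, (G n (q * k - n) k q p).Adj v (σ v) := by
    rintro (x | r)
    · show (G n (q * k - n) k q p).Adj (Sum.inl x) (Sum.inr (Φ.symm x))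
      have h0 := (phi_adj I (fun i => (hcards i).1) eS (Φ.symm x)).symm
      rwa [← hΦapp, Equiv.apply_symm_apply] at h0
    · show (G n (q * k - n) k q p).Adj (Sum.inr r) (Sum.inl (Φ r))
      rw [hΦapp]
      exact phi_adj I (fun i => (hcards i).1) eS r
  have hinvol : ∀ v, σ (σ v) = v := by
    rintro (x | r) <;> simp [hσdef]
  let M : (G n (q * k - n) k q p).Subgraph :=
    { verts := Set.univ
      Adj := fun v w => σ v = w
      adj_sub := fun {v w} h => h ▸ hσG v
      edge_vert := fun {v w} _ => Set.mem_univ v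
      symm := ⟨fun v w h => by rw [← h]; exact hinvol v⟩ }
  have hMadj : ∀ v w, M.Adj v w ↔ σ v = w := fun v w => Iff.rfl
  have hM : M.IsPerfectMatching :=
    ⟨fun {v} _ => ⟨σ v, rfl, fun w hw => ((hMadj v w).mp hw).symm⟩, fun v => Set.mem_univ v⟩
  refine ⟨M, hM, ?_⟩
  rw [sum_edgeWeight M hM (fun v => rfl), Fintype.sum_sum_type]
  have hcol : ∀ h : Fin n,
      edgeWeight (q * k - n) q a c s(Sum.inl (Sum.inl h), σ (Sum.inl (Sum.inl h)))
        = hammingDist (c (Φ.symm (Sum.inl h)).1) (a h) := by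
    intro h
    show edgeWeight (q * k - n) q a c s(Sum.inl (Sum.inl h), Sum.inr (Φ.symm (Sum.inl h))) = _
    rcases hgh : Φ.symm (Sum.inl h) with ⟨i, j⟩
    simp [edgeWeight, pw]
  have hfil : ∀ y : Fin (q * k - n),
      edgeWeight (q * k - n) q a c s(Sum.inl (Sum.inr y), σ (Sum.inl (Sum.inr y))) = 0 := by
    intro y
    show edgeWeight (q * k - n) q a c s(Sum.inl (Sum.inr y), Sum.inr (Φ.symm (Sum.inr y))) = 0
    rcases Φ.symm (Sum.inr y) with ⟨i, j⟩
    simp [edgeWeight, pw]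
  simp only [hcol, hfil, Finset.sum_const_zero, add_zero]
  -- now show ∑ h, d(c (Φ.symm (inl h)).1, a h) ≤ B
  have hg : ∀ h : Fin n, h ∈ I ((Φ.symm (Sum.inl h)).1) := by
    intro h
    have h1 : phi I eS (Φ.symm (Sum.inl h)) = Sum.inl h := by
      rw [← hΦapp, Equiv.apply_symm_apply]
    rcases hgh : Φ.symm (Sum.inl h) with ⟨i, j⟩
    rw [hgh] at h1
    dsimp [phi] at h1
    split_ifs at h1 with hlt
    · have h2 := Sum.inl.inj h1
      rw [← h2]
      exact Finset.orderEmbOfFin_mem _ _ _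
  have hBf : ∑ h : Fin n, hammingDist (c ((Φ.symm (Sum.inl h)).1)) (a h) ≤ B := by
    refine le_trans (le_of_eq ?_) hB
    rw [← fiber_sum m a c (fun h => (Φ.symm (Sum.inl h)).1)]
    refine Finset.sum_congr rfl fun i _ => ?_
    congr 1
    ext x
    simp only [Finset.mem_filter, Finset.mem_univ, true_and]
    constructor
    · rintro rfl
      exact hg x
    · intro hx
      exact ((hmemiff x _).mp (hg x)).symm.trans ((hmemiff x i).mp hx)
  exact hBf

end Aux

/-- Given medians `c_1, ..., c_k`, the auxiliary bipartite graph has a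
perfect matching of weight at most `B` if and only if there is a `k`-clustering
`{I_1, ..., I_k}` of `A` with `p ≤ |I_i| ≤ q` for all `i` and total cost (w.r.t. the
medians `c_1, ..., c_k`) at most `B`. -/

theorem perfectMatching_iff_capacitatedClustering
    {α : Type*} [Fintype α] [Nonempty α] [DecidableEq α]
    (m n k B p q : ℕ) (hm : 0 < m) (hn : 0 < n) (hk : 0 < k)
    (hp : 0 < p) (hpq : p ≤ q) (hlow : p * k ≤ n) (hhigh : n ≤ q * k)
    (a : Fin n → Fin m → α) (c : Fin k → Fin m → α) :
    (∃ M : (G n (q * k - n) k q p).Subgraph, M.IsPerfectMatching ∧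
        (∑ᶠ e ∈ M.edgeSet, edgeWeight (q * k - n) q a c e) ≤ B) ↔
    (∃ I : Fin k → Finset (Fin n),
      (∀ i j : Fin k, i ≠ j → Disjoint (I i) (I j)) ∧
      (∀ x : Fin n, ∃ i, x ∈ I i) ∧
      (∀ i : Fin k, p ≤ (I i).card ∧ (I i).card ≤ q) ∧
      (∑ i, ∑ j ∈ I i, hammingDist (c i) (a j)) ≤ B) := by
  constructor
  · rintro ⟨M, hM, hw⟩
    exact forward_dir hpq a c M hM hw
  · rintro ⟨I, hdisj, hcov, hcards, hB⟩
    exact backward_dir hhigh a c I hdisj hcov hcards hB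

end CapacitatedClusteringMatching
end
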